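/- arXiv:1308.4877 — 4 statements merged into one kernel-verified Lean document; each statement's English description precedes it below -/
import Mathlib

section
/- There exists a finite poset P whose cover graph does not contain K_4 as a minor (equivalently, has treewidth at most 2) such that P contains as a subposet the poset obtained from the standard example S_5 by deleting one of its elements. -/
/-- `y` covers `x` in the partial order `P`. -/
def Covers {α : Type*} (P : PartialOrder α) (x y : α) : Prop :=
  P.lt x y ∧ ∀ z, P.lt x z → ¬ P.lt z y

/-- The cover graph of a partial order: `x` is adjacent to `y` iff one covers the other. -/
def coverGraph {α : Type*} (P : PartialOrder α) : SimpleGraph α where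
  Adj x y := Covers P x y ∨ Covers P y x
  symm := ⟨fun _ _ h => h.symm⟩
  loopless := by
    constructor
    intro x h
    letI := P
    rcases h with ⟨h1, _⟩ | ⟨h1, _⟩ <;> exact lt_irrefl x h1

/-- `H` is a minor of `G`: there are pairwise disjoint nonempty branch sets `B x ⊆ V(G)`,
one per vertex `x` of `H`, each inducing a connected subgraph of `G`, such that every edge
`xy` of `H` is witnessed by an edge of `G` between `B x` and `B y`. -/
def HasMinor {V W : Type*} (G : SimpleGraph V) (H : SimpleGraph W) : Prop :=
  ∃ B : W → Set V,
    (∀ x, (B x).Nonempty) ∧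
    (∀ x y, x ≠ y → Disjoint (B x) (B y)) ∧
    (∀ x, (G.induce (B x)).Connected) ∧
    (∀ x y, H.Adj x y → ∃ u ∈ B x, ∃ v ∈ B y, G.Adj u v)

/-- The strict order of the standard example `S_n` on `Fin n ⊕ Fin n`:
`a_i = Sum.inl i`, `b_j = Sum.inr j`, and the only strict relations are `a_i < b_j` for `i ≠ j`. -/
def stdLT (n : ℕ) : (Fin n ⊕ Fin n) → (Fin n ⊕ Fin n) → Prop
  | Sum.inl i, Sum.inr j => i ≠ j
  | _, _ => False

/-- `P` contains the standard example `S_n` as a subposet. -/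
def ContainsStdExample {α : Type*} (P : PartialOrder α) (n : ℕ) : Prop :=
  ∃ f : Fin n ⊕ Fin n → α, Function.Injective f ∧
    ∀ x y, stdLT n x y ↔ P.lt (f x) (f y)


/- ### Auxiliary construction -/

instance stdLT.decidable (n : ℕ) (x y : Fin n ⊕ Fin n) : Decidable (stdLT n x y) :=
  match x, y with
  | Sum.inl i, Sum.inr j => decidable_of_iff (i ≠ j) Iff.rfl
  | Sum.inl _, Sum.inl _ => isFalse (fun h => h)
  | Sum.inr _, Sum.inl _ => isFalse (fun h => h)
  | Sum.inr _, Sum.inr _ => isFalse (fun h => h)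

/-- Order: `0..4` are the minimal elements `a₁..a₅`, `5..8` are maximal `b₁..b₄`,
`9, 10` are two intermediate hub elements. -/
def myle (a b : Fin 11) : Bool :=
  a = b ||
  decide ((a.val, b.val) ∈ [(0,9),(0,6),(0,7),(0,8),
    (1,9),(1,5),(1,7),(1,8),
    (2,10),(2,5),(2,6),(2,8),
    (3,10),(3,5),(3,6),(3,7),
    (4,9),(4,10),(4,5),(4,6),(4,7),(4,8),
    (9,7),(9,8),(10,5),(10,6)])

theorem myle_refl : ∀ a, myle a a = true := by decide
theorem myle_trans : ∀ a b c : Fin 11, myle a b = true → myle b c = true → myle a c = true := by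
  decide
theorem myle_antisymm : ∀ a b : Fin 11, myle a b = true → myle b a = true → a = b := by decide

def P11 : PartialOrder (Fin 11) where
  le a b := myle a b = true
  lt a b := myle a b = true ∧ ¬ myle b a = true
  le_refl := myle_refl
  le_trans := myle_trans
  le_antisymm := myle_antisymm
  lt_iff_le_not_ge := fun _ _ => Iff.rfl

instance : DecidableRel P11.lt := fun a b =>
  inferInstanceAs (Decidable (myle a b = true ∧ ¬ myle b a = true))

instance : ∀ a b, Decidable (Covers P11 a b) := fun a b =>
  inferInstanceAs (Decidable (P11.lt a b ∧ ∀ z, P11.lt a z → ¬ P11.lt z b))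

instance : DecidableRel (coverGraph P11).Adj := fun a b =>
  inferInstanceAs (Decidable (Covers P11 a b ∨ Covers P11 b a))

/-- Explicit adjacency table of the cover graph of `P11`: it is a generalized theta graph
consisting of five internally disjoint paths between the two hubs `9` and `10`. -/
def adjB (a b : Fin 11) : Bool :=
  decide ((a.val, b.val) ∈
    [(0,9),(1,9),(4,9),(4,10),(2,10),(3,10),(9,7),(9,8),(10,5),(10,6),(1,5),(0,6),(3,7),(2,8)]) ||
  decide ((b.val, a.val) ∈
    [(0,9),(1,9),(4,9),(4,10),(2,10),(3,10),(9,7),(9,8),(10,5),(10,6),(1,5),(0,6),(3,7),(2,8)])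

lemma adj_iff : ∀ a b, (coverGraph P11).Adj a b ↔ adjB a b = true := by decide

/-- The hub (`9` or `10`) adjacent to a non-hub vertex. -/
def hubOf : Fin 11 → Fin 11 := fun a => if a.val ∈ [2,3,5,6] then 10 else 9

lemma hubOf_mem : ∀ u : Fin 11, hubOf u = 9 ∨ hubOf u = 10 := by decide

/-- A non-hub vertex having a non-hub neighbour `v` has neighbourhood `{v, hubOf u}`. -/
lemma nbhd_fact : ∀ u v c : Fin 11, adjB u v = true → v ≠ 9 → v ≠ 10 → u ≠ 9 → u ≠ 10 →
    adjB u c = true → c = v ∨ c = hubOf u := by decide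

/-- If some vertex `u` of `B` has no neighbour inside `B`, then connectivity of the
induced graph forces `B = {u}`. -/
lemma walk_stay {V : Type} (G : SimpleGraph V) (B : Set V) (u : V)
    (hN : ∀ c, G.Adj u c → c ∉ B) :
    ∀ (a b : B) (p : (G.induce B).Walk a b), a.1 = u → b.1 = u := by
  intro a b p
  induction p with
  | nil => exact fun h => h
  | @cons a' c b' h q ih =>
    intro ha
    exact absurd c.2 (hN c.1 (ha ▸ h))

lemma conn_singleton {V : Type} (G : SimpleGraph V) (B : Set V)
    (hc : (G.induce B).Connected) (u : V) (hu : u ∈ B)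
    (hN : ∀ c, G.Adj u c → c ∉ B) : ∀ t ∈ B, t = u := by
  intro t ht
  obtain ⟨p⟩ := hc.preconnected ⟨u, hu⟩ ⟨t, ht⟩
  exact walk_stay G B u hN ⟨u, hu⟩ ⟨t, ht⟩ p rfl

/-- The cover graph of `P11` has no `K₄` minor. -/
lemma P11_no_K4_minor : ¬ HasMinor (coverGraph P11) (⊤ : SimpleGraph (Fin 4)) := by
  classical
  rintro ⟨B, hne, hdisj, hconn, hedge⟩
  have hdj : ∀ (m : Fin 11) (i j : Fin 4), i ≠ j → m ∈ B i → m ∈ B j → False :=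
    fun m i j hij hi hj => Set.disjoint_left.mp (hdisj i j hij) hi hj
  -- at most one branch set contains `9` and at most one contains `10`,
  -- so two branch sets avoid both hubs
  have key : ∃ x y : Fin 4, x ≠ y ∧ ((9:Fin 11) ∉ B x ∧ (10:Fin 11) ∉ B x) ∧
      ((9:Fin 11) ∉ B y ∧ (10:Fin 11) ∉ B y) := by
    set s : Finset (Fin 4) :=
      Finset.univ.filter (fun i => (9:Fin 11) ∈ B i ∨ (10:Fin 11) ∈ B i) with hs_def
    have h9 : (Finset.univ.filter (fun i => (9:Fin 11) ∈ B i)).card ≤ 1 := by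
      refine Finset.card_le_one.mpr ?_
      intro a ha b hb
      simp only [Finset.mem_filter] at ha hb
      by_contra hab
      exact hdj 9 a b hab ha.2 hb.2
    have h10 : (Finset.univ.filter (fun i => (10:Fin 11) ∈ B i)).card ≤ 1 := by
      refine Finset.card_le_one.mpr ?_
      intro a ha b hb
      simp only [Finset.mem_filter] at ha hb
      by_contra hab
      exact hdj 10 a b hab ha.2 hb.2
    have hsub : s ⊆ (Finset.univ.filter (fun i => (9:Fin 11) ∈ B i)) ∪
        (Finset.univ.filter (fun i => (10:Fin 11) ∈ B i)) := by
      intro i hi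
      simp only [hs_def, Finset.mem_filter, Finset.mem_union] at hi ⊢
      tauto
    have hcard : s.card ≤ 2 := by
      calc s.card ≤ _ := Finset.card_le_card hsub
        _ ≤ _ := Finset.card_union_le _ _
        _ ≤ 2 := by omega
    have hcompl : 1 < sᶜ.card := by
      have := Finset.card_compl s (α := Fin 4)
      simp only [Fintype.card_fin] at this
      omega
    obtain ⟨x, hx, y, hy, hxy⟩ := Finset.one_lt_card.mp hcompl
    simp only [Finset.mem_compl, hs_def, Finset.mem_filter, Finset.mem_univ, true_and,
      not_or] at hx hy
    exact ⟨x, y, hxy, hx, hy⟩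
  obtain ⟨x, y, hxy, ⟨hx9, hx10⟩, ⟨hy9, hy10⟩⟩ := key
  -- an edge between `B x` and `B y`
  obtain ⟨u, hu, v, hv, huv⟩ := hedge x y (by simpa using hxy)
  have hu9 : u ≠ 9 := fun h => hx9 (h ▸ hu)
  have hu10 : u ≠ 10 := fun h => hx10 (h ▸ hu)
  have hv9 : v ≠ 9 := fun h => hy9 (h ▸ hv)
  have hv10 : v ≠ 10 := fun h => hy10 (h ▸ hv)
  have huvB : adjB u v = true := (adj_iff u v).mp huv
  -- B x = {u}
  have hBx : ∀ t ∈ B x, t = u := by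
    refine conn_singleton _ _ (hconn x) u hu ?_
    intro c hc hcB
    rcases nbhd_fact u v c huvB hv9 hv10 hu9 hu10 ((adj_iff u c).mp hc) with rfl | rfl
    · exact hdj c x y hxy hcB hv
    · rcases hubOf_mem u with h | h <;> rw [h] at hcB
      · exact hx9 hcB
      · exact hx10 hcB
  -- the two remaining branch sets
  obtain ⟨z, w, hzw, hzx, hzy, hwx, hwy⟩ :
      ∃ z w : Fin 4, z ≠ w ∧ z ≠ x ∧ z ≠ y ∧ w ≠ x ∧ w ≠ y := by
    have : ∀ x y : Fin 4, x ≠ y → ∃ z w : Fin 4, z ≠ w ∧ z ≠ x ∧ z ≠ y ∧ w ≠ x ∧ w ≠ y := by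
      decide
    exact this x y hxy
  -- the edges from B x to B z and B w must both use `hubOf u`
  have main : ∀ t : Fin 4, t ≠ x → t ≠ y → hubOf u ∈ B t := by
    intro t htx hty
    obtain ⟨u1, hu1, c, hc, hadj1⟩ := hedge x t (by simpa using fun h => htx h.symm)
    have hu1u : u1 = u := hBx u1 hu1
    rw [hu1u] at hadj1
    rcases nbhd_fact u v c huvB hv9 hv10 hu9 hu10 ((adj_iff u c).mp hadj1) with rfl | rfl
    · exact (hdj c y t (fun h => hty h.symm) hv hc).elim
    · exact hc
  exact hdj (hubOf u) z w hzw (main z hzx hzy) (main w hwx hwy)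

def f5 : {x : Fin 5 ⊕ Fin 5 // x ≠ Sum.inr 4} → Fin 11 := fun x =>
  match x.1 with
  | Sum.inl i => ⟨i.val, by omega⟩
  | Sum.inr j => ⟨j.val + 5, by omega⟩


/-- There is a finite poset `P` whose cover graph has no `K_4` minor
(equivalently, has treewidth at most 2) such that `P` contains as a subposet the poset
obtained from the standard example `S_5` by deleting one of its elements. -/
theorem exists_poset_no_K4_minor_containing_S5_minus_element :
    ∃ (α : Type) (_ : Fintype α) (P : PartialOrder α),
      ¬ HasMinor (coverGraph P) (⊤ : SimpleGraph (Fin 4)) ∧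
      ∃ (x₀ : Fin 5 ⊕ Fin 5) (f : {x : Fin 5 ⊕ Fin 5 // x ≠ x₀} → α),
        Function.Injective f ∧
        ∀ a b : {x : Fin 5 ⊕ Fin 5 // x ≠ x₀}, stdLT 5 a.1 b.1 ↔ P.lt (f a) (f b) := by
  refine ⟨Fin 11, inferInstance, P11, P11_no_K4_minor, Sum.inr 4, f5, ?_, ?_⟩
  · decide
  · decide
end

section
/- Let G be a finite graph containing a cycle C, and let P and Q be two vertex-disjoint C-paths, where P has endpoints p_1, p_2 and Q has endpoints q_1, q_2, all four endpoints distinct, and these endpoints appear in the cyclic order p_1, q_1, p_2, q_2 around C. Then G contains K_4 as a minor. -/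
private def arcWalk {V : Type*} (G : SimpleGraph V) {n : ℕ} (c : Fin n → V)
    (hcyc : ∀ r s : Fin n, ((r : ℕ) + 1) % n = (s : ℕ) → G.Adj (c r) (c s)) :
    (a k : ℕ) → (h : a + k < n) → G.Walk (c ⟨a, by omega⟩) (c ⟨a + k, h⟩)
  | _, 0, _ => SimpleGraph.Walk.nil
  | a, k + 1, h =>
    (arcWalk G c hcyc a k (by omega)).concat
      (hcyc ⟨a + k, by omega⟩ ⟨a + k + 1, h⟩ (Nat.mod_eq_of_lt h))

private lemma arcWalk_support {V : Type*} (G : SimpleGraph V) {n : ℕ} (c : Fin n → V)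
    (hcyc : ∀ r s : Fin n, ((r : ℕ) + 1) % n = (s : ℕ) → G.Adj (c r) (c s)) (a : ℕ) :
    ∀ (k : ℕ) (h : a + k < n) (v : V),
      v ∈ (arcWalk G c hcyc a k h).support ↔
        ∃ j, j ≤ k ∧ ∃ hj : a + j < n, v = c ⟨a + j, hj⟩ := by
  intro k
  induction k with
  | zero =>
    intro h v
    simp only [arcWalk, SimpleGraph.Walk.support_nil, List.mem_singleton]
    constructor
    · rintro rfl; exact ⟨0, le_rfl, h, rfl⟩
    · rintro ⟨j, hj0, hj, rfl⟩
      obtain rfl : j = 0 := by omega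
      rfl
  | succ k ih =>
    intro h v
    rw [arcWalk, SimpleGraph.Walk.support_concat,
      List.mem_append, List.mem_singleton, ih (by omega)]
    constructor
    · rintro (⟨j, hjk, hj, rfl⟩ | rfl)
      · exact ⟨j, by omega, hj, rfl⟩
      · exact ⟨k + 1, le_rfl, h, rfl⟩
    · rintro ⟨j, hjk, hj, rfl⟩
      rcases Nat.lt_or_ge j (k + 1) with hlt | hge
      · exact Or.inl ⟨j, by omega, hj, rfl⟩
      · obtain rfl : j = k + 1 := by omega
        exact Or.inr rfl

private lemma arcWalk_support_set {V : Type*} (G : SimpleGraph V) {n : ℕ} (c : Fin n → V)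
    (hcyc : ∀ r s : Fin n, ((r : ℕ) + 1) % n = (s : ℕ) → G.Adj (c r) (c s))
    (a b : ℕ) (hab : a ≤ b) (hb : b < n) :
    {v | v ∈ (arcWalk G c hcyc a (b - a) (by omega)).support} =
      c '' {i : Fin n | a ≤ (i : ℕ) ∧ (i : ℕ) ≤ b} := by
  ext v
  simp only [Set.mem_setOf_eq, arcWalk_support, Set.mem_image]
  constructor
  · rintro ⟨j, hjk, hj, rfl⟩
    refine ⟨⟨a + j, hj⟩, ⟨?_, ?_⟩, rfl⟩
    · show a ≤ a + j; omega
    · show a + j ≤ b; omega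
  · rintro ⟨i, ⟨hai, hib⟩, rfl⟩
    refine ⟨(i : ℕ) - a, by omega, by omega, ?_⟩
    have hieq : i = (⟨a + ((i : ℕ) - a), by omega⟩ : Fin n) :=
      Fin.ext (show (i : ℕ) = a + ((i : ℕ) - a) by omega)
    exact congrArg c hieq



/-- Let `G` be a finite graph containing a cycle `C` (given by the
injective cyclic enumeration `c`), and let `P` and `Q` be two vertex-disjoint `C`-paths,
with endpoints `p₁, p₂` and `q₁, q₂` respectively, all four distinct, appearing in the
cyclic order `p₁, q₁, p₂, q₂` around `C`. Then `G` contains `K_4` as a minor. -/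
theorem hasK4Minor_of_crossing_paths {V : Type*} [Fintype V] (G : SimpleGraph V)
    (n : ℕ) (hn : 3 ≤ n) (c : Fin n → V) (hinj : Function.Injective c)
    (hcyc : ∀ r s : Fin n, ((r : ℕ) + 1) % n = (s : ℕ) → G.Adj (c r) (c s))
    (p₁ p₂ q₁ q₂ : V) (P : G.Walk p₁ p₂) (Q : G.Walk q₁ q₂)
    (hP : P.IsPath) (hQ : Q.IsPath)
    -- `P` and `Q` are `C`-paths: they meet the cycle exactly in their endpoints
    (hPC : {v | v ∈ P.support} ∩ Set.range c = {p₁, p₂})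
    (hQC : {v | v ∈ Q.support} ∩ Set.range c = {q₁, q₂})
    -- `P` and `Q` are vertex-disjoint
    (hdisj : ∀ v, v ∈ P.support → v ∉ Q.support)
    -- the endpoints appear in the cyclic order `p₁, q₁, p₂, q₂` around the cycle
    (t₁ t₂ t₃ t₄ : Fin n)
    (h₁₂ : (t₁ : ℕ) < t₂) (h₂₃ : (t₂ : ℕ) < t₃) (h₃₄ : (t₃ : ℕ) < t₄)
    (hc₁ : c t₁ = p₁) (hc₂ : c t₂ = q₁) (hc₃ : c t₃ = p₂) (hc₄ : c t₄ = q₂) :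
    HasMinor G (⊤ : SimpleGraph (Fin 4)) := by
  classical
  have ht4 : (t₄ : ℕ) < n := t₄.isLt
  have hvalinj : ∀ {i j : Fin n}, c i = c j → (i : ℕ) = (j : ℕ) :=
    fun h => congrArg Fin.val (hinj h)
  have hp12 : p₁ ≠ p₂ := by
    rw [← hc₁, ← hc₃]
    intro h; have := hvalinj h; omega
  have hq12 : q₁ ≠ q₂ := by
    rw [← hc₂, ← hc₄]
    intro h; have := hvalinj h; omega
  -- decompose P into its last edge and the rest
  obtain ⟨x, ex, R, hPrev⟩ := SimpleGraph.Walk.exists_eq_cons_of_ne hp12.symm P.reverse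
  have hPrevPath : P.reverse.IsPath := hP.reverse
  rw [hPrev, SimpleGraph.Walk.cons_isPath_iff] at hPrevPath
  have hRmem : ∀ v, v ∈ R.support ↔ v ∈ P.support ∧ v ≠ p₂ := by
    intro v
    have hs : P.support.reverse = p₂ :: R.support := by
      rw [← SimpleGraph.Walk.support_reverse, hPrev, SimpleGraph.Walk.support_cons]
    constructor
    · intro hv
      refine ⟨?_, fun hvp => hPrevPath.2 (hvp ▸ hv)⟩
      have : v ∈ P.support.reverse := hs ▸ List.mem_cons_of_mem _ hv
      exact List.mem_reverse.mp this
    · rintro ⟨hv, hne⟩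
      have hv' : v ∈ P.support.reverse := List.mem_reverse.mpr hv
      rw [hs] at hv'
      rcases List.mem_cons.mp hv' with h | h
      · exact absurd h hne
      · exact h
  -- decompose Q into its last edge and the rest
  obtain ⟨y, ey, S, hQrev⟩ := SimpleGraph.Walk.exists_eq_cons_of_ne hq12.symm Q.reverse
  have hQrevPath : Q.reverse.IsPath := hQ.reverse
  rw [hQrev, SimpleGraph.Walk.cons_isPath_iff] at hQrevPath
  have hSmem : ∀ v, v ∈ S.support ↔ v ∈ Q.support ∧ v ≠ q₂ := by
    intro v
    have hs : Q.support.reverse = q₂ :: S.support := by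
      rw [← SimpleGraph.Walk.support_reverse, hQrev, SimpleGraph.Walk.support_cons]
    constructor
    · intro hv
      refine ⟨?_, fun hvp => hQrevPath.2 (hvp ▸ hv)⟩
      have : v ∈ Q.support.reverse := hs ▸ List.mem_cons_of_mem _ hv
      exact List.mem_reverse.mp this
    · rintro ⟨hv, hne⟩
      have hv' : v ∈ Q.support.reverse := List.mem_reverse.mpr hv
      rw [hs] at hv'
      rcases List.mem_cons.mp hv' with h | h
      · exact absurd h hne
      · exact h
  -- cycle vertices on P are endpoints
  have hPonC : ∀ i : Fin n, c i ∈ P.support → c i = p₁ ∨ c i = p₂ := by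
    intro i hi
    have : c i ∈ ({p₁, p₂} : Set V) := by
      rw [← hPC]; exact ⟨hi, Set.mem_range_self i⟩
    simpa using this
  have hQonC : ∀ i : Fin n, c i ∈ Q.support → c i = q₁ ∨ c i = q₂ := by
    intro i hi
    have : c i ∈ ({q₁, q₂} : Set V) := by
      rw [← hQC]; exact ⟨hi, Set.mem_range_self i⟩
    simpa using this
  have hRidx : ∀ i : Fin n, c i ∈ R.support → i = t₁ := by
    intro i hi
    obtain ⟨hiP, hne⟩ := (hRmem (c i)).mp hi
    rcases hPonC i hiP with h | h
    · exact hinj (h.trans hc₁.symm)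
    · exact absurd h hne
  have hSidx : ∀ i : Fin n, c i ∈ S.support → i = t₂ := by
    intro i hi
    obtain ⟨hiQ, hne⟩ := (hSmem (c i)).mp hi
    rcases hQonC i hiQ with h | h
    · exact hinj (h.trans hc₂.symm)
    · exact absurd h hne
  -- the four branch sets
  set A1 : Set V := c '' {i : Fin n | (t₁ : ℕ) ≤ (i : ℕ) ∧ (i : ℕ) < (t₂ : ℕ)} with hA1def
  set A2 : Set V := c '' {i : Fin n | (t₂ : ℕ) ≤ (i : ℕ) ∧ (i : ℕ) < (t₃ : ℕ)} with hA2def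
  set A3 : Set V := c '' {i : Fin n | (t₃ : ℕ) ≤ (i : ℕ) ∧ (i : ℕ) < (t₄ : ℕ)} with hA3def
  set A4 : Set V := c '' {i : Fin n | (t₄ : ℕ) ≤ (i : ℕ) ∨ (i : ℕ) < (t₁ : ℕ)} with hA4def
  set PR : Set V := {v | v ∈ R.support} with hPRdef
  set QS : Set V := {v | v ∈ S.support} with hQSdef
  -- disjointness of the pieces
  have himg : ∀ (Sa Ta : Set (Fin n)), (∀ i : Fin n, i ∈ Sa → i ∈ Ta → False) →
      Disjoint (c '' Sa) (c '' Ta) := by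
    intro Sa Ta hST
    rw [Set.disjoint_left]
    rintro v ⟨i, hi, rfl⟩ ⟨j, hj, hji⟩
    exact hST i hi ((hinj hji) ▸ hj)
  have d12 : Disjoint A1 A2 := himg _ _ (by intro i hi hi'; simp only [Set.mem_setOf_eq] at hi hi'; omega)
  have d13 : Disjoint A1 A3 := himg _ _ (by intro i hi hi'; simp only [Set.mem_setOf_eq] at hi hi'; omega)
  have d14 : Disjoint A1 A4 := himg _ _ (by intro i hi hi'; simp only [Set.mem_setOf_eq] at hi hi'; omega)
  have d23 : Disjoint A2 A3 := himg _ _ (by intro i hi hi'; simp only [Set.mem_setOf_eq] at hi hi'; omega)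
  have d24 : Disjoint A2 A4 := himg _ _ (by intro i hi hi'; simp only [Set.mem_setOf_eq] at hi hi'; omega)
  have d34 : Disjoint A3 A4 := himg _ _ (by intro i hi hi'; simp only [Set.mem_setOf_eq] at hi hi'; omega)
  -- PR only meets the cycle at index t₁, QS at t₂
  have dPR : ∀ (Ta : Set (Fin n)), (t₁ ∉ Ta) → Disjoint PR (c '' Ta) := by
    intro Ta ht
    rw [Set.disjoint_left]
    rintro v hv ⟨i, hi, rfl⟩
    have : i = t₁ := hRidx i hv
    exact ht (this ▸ hi)
  have dQS : ∀ (Ta : Set (Fin n)), (t₂ ∉ Ta) → Disjoint QS (c '' Ta) := by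
    intro Ta ht
    rw [Set.disjoint_left]
    rintro v hv ⟨i, hi, rfl⟩
    have : i = t₂ := hSidx i hv
    exact ht (this ▸ hi)
  have dPQ : Disjoint PR QS := by
    rw [Set.disjoint_left]
    intro v hv hv'
    exact hdisj v ((hRmem v).mp hv).1 ((hSmem v).mp hv').1
  have dPR2 : Disjoint PR A2 := dPR _ (by simp only [Set.mem_setOf_eq]; omega)
  have dPR3 : Disjoint PR A3 := dPR _ (by simp only [Set.mem_setOf_eq]; omega)
  have dPR4 : Disjoint PR A4 := dPR _ (by simp only [Set.mem_setOf_eq]; omega)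
  have dQS1 : Disjoint QS A1 := dQS _ (by simp only [Set.mem_setOf_eq]; omega)
  have dQS3 : Disjoint QS A3 := dQS _ (by simp only [Set.mem_setOf_eq]; omega)
  have dQS4 : Disjoint QS A4 := dQS _ (by simp only [Set.mem_setOf_eq]; omega)
  -- the six disjointness facts
  have hd01 : Disjoint (A1 ∪ PR) (A2 ∪ QS) := by
    rw [Set.disjoint_union_left, Set.disjoint_union_right, Set.disjoint_union_right]
    exact ⟨⟨d12, dQS1.symm⟩, ⟨dPR2, dPQ⟩⟩
  have hd02 : Disjoint (A1 ∪ PR) A3 := by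
    rw [Set.disjoint_union_left]; exact ⟨d13, dPR3⟩
  have hd03 : Disjoint (A1 ∪ PR) A4 := by
    rw [Set.disjoint_union_left]; exact ⟨d14, dPR4⟩
  have hd12 : Disjoint (A2 ∪ QS) A3 := by
    rw [Set.disjoint_union_left]; exact ⟨d23, dQS3⟩
  have hd13 : Disjoint (A2 ∪ QS) A4 := by
    rw [Set.disjoint_union_left]; exact ⟨d24, dQS4⟩
  have hd23 : Disjoint A3 A4 := d34
  -- connectivity of the four branch sets
  have hconn0 : (G.induce (A1 ∪ PR)).Connected := by
    have harc := arcWalk_support_set G c hcyc (t₁ : ℕ) ((t₂ : ℕ) - 1) (by omega) (by omega)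
    have hset : A1 ∪ PR =
        {v | v ∈ ((arcWalk G c hcyc (t₁ : ℕ) ((t₂ : ℕ) - 1 - (t₁ : ℕ)) (by omega)).reverse.append
          (R.reverse.copy hc₁.symm rfl)).support} := by
      ext v
      simp only [Set.mem_union, Set.mem_setOf_eq, SimpleGraph.Walk.mem_support_append_iff,
        SimpleGraph.Walk.support_copy, SimpleGraph.Walk.support_reverse, List.mem_reverse]
      have hv1 : v ∈ A1 ↔ v ∈ (arcWalk G c hcyc (t₁ : ℕ) ((t₂ : ℕ) - 1 - (t₁ : ℕ))
          (by omega)).support := by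
        have : v ∈ A1 ↔ v ∈ c '' {i : Fin n | (t₁ : ℕ) ≤ (i : ℕ) ∧ (i : ℕ) ≤ (t₂ : ℕ) - 1} := by
          rw [hA1def]
          constructor
          · rintro ⟨i, hi, rfl⟩
            exact ⟨i, by simp only [Set.mem_setOf_eq] at hi ⊢; omega, rfl⟩
          · rintro ⟨i, hi, rfl⟩
            exact ⟨i, by simp only [Set.mem_setOf_eq] at hi ⊢; omega, rfl⟩
        rw [this, ← harc]
        rfl
      rw [hv1]
      tauto
    rw [hset]
    exact SimpleGraph.Walk.connected_induce_support _
  have hconn1 : (G.induce (A2 ∪ QS)).Connected := by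
    have harc := arcWalk_support_set G c hcyc (t₂ : ℕ) ((t₃ : ℕ) - 1) (by omega) (by omega)
    have hset : A2 ∪ QS =
        {v | v ∈ ((arcWalk G c hcyc (t₂ : ℕ) ((t₃ : ℕ) - 1 - (t₂ : ℕ)) (by omega)).reverse.append
          (S.reverse.copy hc₂.symm rfl)).support} := by
      ext v
      simp only [Set.mem_union, Set.mem_setOf_eq, SimpleGraph.Walk.mem_support_append_iff,
        SimpleGraph.Walk.support_copy, SimpleGraph.Walk.support_reverse, List.mem_reverse]
      have hv1 : v ∈ A2 ↔ v ∈ (arcWalk G c hcyc (t₂ : ℕ) ((t₃ : ℕ) - 1 - (t₂ : ℕ))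
          (by omega)).support := by
        have : v ∈ A2 ↔ v ∈ c '' {i : Fin n | (t₂ : ℕ) ≤ (i : ℕ) ∧ (i : ℕ) ≤ (t₃ : ℕ) - 1} := by
          rw [hA2def]
          constructor
          · rintro ⟨i, hi, rfl⟩
            exact ⟨i, by simp only [Set.mem_setOf_eq] at hi ⊢; omega, rfl⟩
          · rintro ⟨i, hi, rfl⟩
            exact ⟨i, by simp only [Set.mem_setOf_eq] at hi ⊢; omega, rfl⟩
        rw [this, ← harc]
        rfl
      rw [hv1]
      tauto
    rw [hset]
    exact SimpleGraph.Walk.connected_induce_support _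
  have hconn2 : (G.induce A3).Connected := by
    have harc := arcWalk_support_set G c hcyc (t₃ : ℕ) ((t₄ : ℕ) - 1) (by omega) (by omega)
    have hset : A3 = {v | v ∈ (arcWalk G c hcyc (t₃ : ℕ) ((t₄ : ℕ) - 1 - (t₃ : ℕ))
        (by omega)).support} := by
      rw [harc, hA3def]
      have hseteq : {i : Fin n | (t₃ : ℕ) ≤ (i : ℕ) ∧ (i : ℕ) < (t₄ : ℕ)} =
          {i : Fin n | (t₃ : ℕ) ≤ (i : ℕ) ∧ (i : ℕ) ≤ (t₄ : ℕ) - 1} := by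
        ext i; simp only [Set.mem_setOf_eq]; omega
      rw [hseteq]
    rw [hset]
    exact SimpleGraph.Walk.connected_induce_support _
  have hconn3 : (G.induce A4).Connected := by
    rcases Nat.eq_zero_or_pos (t₁ : ℕ) with ht1 | ht1
    · have harc := arcWalk_support_set G c hcyc (t₄ : ℕ) (n - 1) (by omega) (by omega)
      have hset : A4 = {v | v ∈ (arcWalk G c hcyc (t₄ : ℕ) (n - 1 - (t₄ : ℕ))
          (by omega)).support} := by
        rw [harc, hA4def]
        have hseteq : {i : Fin n | (t₄ : ℕ) ≤ (i : ℕ) ∨ (i : ℕ) < (t₁ : ℕ)} =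
            {i : Fin n | (t₄ : ℕ) ≤ (i : ℕ) ∧ (i : ℕ) ≤ n - 1} := by
          ext i; simp only [Set.mem_setOf_eq]; have := i.isLt; omega
        rw [hseteq]
      rw [hset]
      exact SimpleGraph.Walk.connected_induce_support _
    · set W : G.Walk (c t₄) (c ⟨0 + ((t₁ : ℕ) - 1), by omega⟩) :=
        ((arcWalk G c hcyc (t₄ : ℕ) (n - 1 - (t₄ : ℕ)) (by omega)).concat
          (hcyc ⟨(t₄ : ℕ) + (n - 1 - (t₄ : ℕ)), by omega⟩ ⟨0, by omega⟩
            (by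
              show ((t₄ : ℕ) + (n - 1 - (t₄ : ℕ)) + 1) % n = 0
              rw [show (t₄ : ℕ) + (n - 1 - (t₄ : ℕ)) + 1 = n by omega]
              exact Nat.mod_self n))).append
          (arcWalk G c hcyc 0 ((t₁ : ℕ) - 1) (by omega)) with hW
      have hset : A4 = {v | v ∈ W.support} := by
        ext v
        rw [hW]
        simp only [Set.mem_setOf_eq, SimpleGraph.Walk.mem_support_append_iff,
          SimpleGraph.Walk.support_concat, List.concat_eq_append, List.mem_append,
          List.mem_singleton, arcWalk_support, hA4def]
        constructor
        · rintro ⟨i, hi, rfl⟩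
          simp only [Set.mem_setOf_eq] at hi
          rcases hi with hi | hi
          · refine Or.inl (Or.inl ⟨(i : ℕ) - (t₄ : ℕ), by omega, by omega, ?_⟩)
            exact congrArg c (Fin.ext (show (i : ℕ) = (t₄ : ℕ) + ((i : ℕ) - (t₄ : ℕ)) by omega))
          · refine Or.inr ⟨(i : ℕ), by omega, by omega, ?_⟩
            exact congrArg c (Fin.ext (show (i : ℕ) = 0 + (i : ℕ) by omega))
        · rintro ((⟨j, hj, hjn, rfl⟩ | rfl) | ⟨j, hj, hjn, rfl⟩)
          · exact ⟨⟨(t₄ : ℕ) + j, hjn⟩, Or.inl (show (t₄ : ℕ) ≤ (t₄ : ℕ) + j by omega), rfl⟩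
          · exact ⟨⟨0, by omega⟩, Or.inr (show (0 : ℕ) < (t₁ : ℕ) from ht1), rfl⟩
          · exact ⟨⟨0 + j, hjn⟩, Or.inr (show 0 + j < (t₁ : ℕ) by omega), rfl⟩
      rw [hset]
      exact SimpleGraph.Walk.connected_induce_support _
  -- edges between branch sets
  have e01 : ∃ u ∈ A1 ∪ PR, ∃ v ∈ A2 ∪ QS, G.Adj u v := by
    refine ⟨c ⟨(t₂ : ℕ) - 1, by omega⟩, Or.inl ⟨⟨(t₂ : ℕ) - 1, by omega⟩,
      ⟨show (t₁ : ℕ) ≤ (t₂ : ℕ) - 1 by omega, show (t₂ : ℕ) - 1 < (t₂ : ℕ) by omega⟩, rfl⟩,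
      c t₂, Or.inl ⟨t₂, ⟨le_rfl, h₂₃⟩, rfl⟩, ?_⟩
    refine hcyc _ _ ?_
    show ((t₂ : ℕ) - 1 + 1) % n = (t₂ : ℕ)
    rw [show (t₂ : ℕ) - 1 + 1 = (t₂ : ℕ) by omega]
    exact Nat.mod_eq_of_lt t₂.isLt
  have e12 : ∃ u ∈ A2 ∪ QS, ∃ v ∈ A3, G.Adj u v := by
    refine ⟨c ⟨(t₃ : ℕ) - 1, by omega⟩, Or.inl ⟨⟨(t₃ : ℕ) - 1, by omega⟩,
      ⟨show (t₂ : ℕ) ≤ (t₃ : ℕ) - 1 by omega, show (t₃ : ℕ) - 1 < (t₃ : ℕ) by omega⟩, rfl⟩,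
      c t₃, ⟨t₃, ⟨le_rfl, h₃₄⟩, rfl⟩, ?_⟩
    refine hcyc _ _ ?_
    show ((t₃ : ℕ) - 1 + 1) % n = (t₃ : ℕ)
    rw [show (t₃ : ℕ) - 1 + 1 = (t₃ : ℕ) by omega]
    exact Nat.mod_eq_of_lt t₃.isLt
  have e23 : ∃ u ∈ A3, ∃ v ∈ A4, G.Adj u v := by
    refine ⟨c ⟨(t₄ : ℕ) - 1, by omega⟩, ⟨⟨(t₄ : ℕ) - 1, by omega⟩,
      ⟨show (t₃ : ℕ) ≤ (t₄ : ℕ) - 1 by omega, show (t₄ : ℕ) - 1 < (t₄ : ℕ) by omega⟩, rfl⟩,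
      c t₄, ⟨t₄, Or.inl le_rfl, rfl⟩, ?_⟩
    refine hcyc _ _ ?_
    show ((t₄ : ℕ) - 1 + 1) % n = (t₄ : ℕ)
    rw [show (t₄ : ℕ) - 1 + 1 = (t₄ : ℕ) by omega]
    exact Nat.mod_eq_of_lt t₄.isLt
  have e30 : ∃ u ∈ A4, ∃ v ∈ A1 ∪ PR, G.Adj u v := by
    rcases Nat.eq_zero_or_pos (t₁ : ℕ) with ht1 | ht1
    · refine ⟨c ⟨n - 1, by omega⟩, ⟨⟨n - 1, by omega⟩, Or.inl (show (t₄ : ℕ) ≤ n - 1 by omega),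
        rfl⟩, c t₁, Or.inl ⟨t₁, ⟨le_rfl, h₁₂⟩, rfl⟩, ?_⟩
      refine hcyc _ _ ?_
      show (n - 1 + 1) % n = (t₁ : ℕ)
      rw [show n - 1 + 1 = n by omega, Nat.mod_self]
      omega
    · refine ⟨c ⟨(t₁ : ℕ) - 1, by omega⟩, ⟨⟨(t₁ : ℕ) - 1, by omega⟩,
        Or.inr (show (t₁ : ℕ) - 1 < (t₁ : ℕ) by omega), rfl⟩,
        c t₁, Or.inl ⟨t₁, ⟨le_rfl, h₁₂⟩, rfl⟩, ?_⟩
      refine hcyc _ _ ?_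
      show ((t₁ : ℕ) - 1 + 1) % n = (t₁ : ℕ)
      rw [show (t₁ : ℕ) - 1 + 1 = (t₁ : ℕ) by omega]
      exact Nat.mod_eq_of_lt t₁.isLt
  have e02 : ∃ u ∈ A1 ∪ PR, ∃ v ∈ A3, G.Adj u v := by
    refine ⟨x, Or.inr ?_, p₂, ?_, ex.symm⟩
    · exact R.start_mem_support
    · exact ⟨t₃, ⟨le_rfl, h₃₄⟩, hc₃⟩
  have e13 : ∃ u ∈ A2 ∪ QS, ∃ v ∈ A4, G.Adj u v := by
    refine ⟨y, Or.inr ?_, q₂, ?_, ey.symm⟩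
    · exact S.start_mem_support
    · exact ⟨t₄, Or.inl le_rfl, hc₄⟩
  have flip : ∀ {Sa Ta : Set V}, (∃ u ∈ Sa, ∃ v ∈ Ta, G.Adj u v) →
      ∃ u ∈ Ta, ∃ v ∈ Sa, G.Adj u v := by
    rintro Sa Ta ⟨u, hu, v, hv, h⟩
    exact ⟨v, hv, u, hu, h.symm⟩
  -- assemble
  refine ⟨![A1 ∪ PR, A2 ∪ QS, A3, A4], ?_, ?_, ?_, ?_⟩
  · intro z
    fin_cases z
    · exact ⟨c t₁, Or.inl ⟨t₁, ⟨le_rfl, h₁₂⟩, rfl⟩⟩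
    · exact ⟨c t₂, Or.inl ⟨t₂, ⟨le_rfl, h₂₃⟩, rfl⟩⟩
    · exact ⟨c t₃, ⟨t₃, ⟨le_rfl, h₃₄⟩, rfl⟩⟩
    · exact ⟨c t₄, ⟨t₄, Or.inl le_rfl, rfl⟩⟩
  · intro z w hzw
    fin_cases z <;> fin_cases w
    · exact absurd rfl hzw
    · exact hd01
    · exact hd02
    · exact hd03
    · exact hd01.symm
    · exact absurd rfl hzw
    · exact hd12
    · exact hd13
    · exact hd02.symm
    · exact hd12.symm
    · exact absurd rfl hzw
    · exact hd23
    · exact hd03.symm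
    · exact hd13.symm
    · exact hd23.symm
    · exact absurd rfl hzw
  · intro z
    fin_cases z
    · exact hconn0
    · exact hconn1
    · exact hconn2
    · exact hconn3
  · intro z w hzw
    fin_cases z <;> fin_cases w
    · exact absurd rfl hzw.ne
    · exact e01
    · exact e02
    · exact flip e30
    · exact flip e01
    · exact absurd rfl hzw.ne
    · exact e12
    · exact e13
    · exact flip e02
    · exact flip e12
    · exact absurd rfl hzw.ne
    · exact e23
    · exact e30
    · exact flip e13
    · exact flip e23
    · exact absurd rfl hzw.ne
end

section
/- Let G be a finite graph containing a cycle C and a vertex x not on C, and suppose there are three paths in G from x to C that pairwise intersect only in x, each of which meets C only in its endpoint on C, and whose endpoints on C are three distinct vertices. Then G contains K_4 as a minor. -/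
open SimpleGraph Walk

section Helpers

variable {V : Type*} {G : SimpleGraph V}

lemma reach_induce_aux {s : Set V} : ∀ {u v : V} (w : G.Walk u v) (hs : ∀ z ∈ w.support, z ∈ s),
    (G.induce s).Reachable ⟨u, hs u w.start_mem_support⟩ ⟨v, hs v w.end_mem_support⟩ := by
  intro u v w
  induction w with
  | nil => exact fun _ => Reachable.refl _
  | @cons u u' v h q ih =>
    intro hs
    have hs' : ∀ z ∈ q.support, z ∈ s := fun z hz => hs z (by simp [hz])
    have h1 : (G.induce s).Adj ⟨u, hs u (start_mem_support _)⟩ ⟨u', hs' u' (start_mem_support _)⟩ := by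
      simp [h]
    exact h1.reachable.trans (ih hs')

lemma mem_take_mem_drop_aux [DecidableEq V] {u v w z : V} {p : G.Walk u v} (hp : p.IsPath)
    (h : w ∈ p.support)
    (h1 : z ∈ (p.takeUntil w h).support) (h2 : z ∈ (p.dropUntil w h).support) : z = w := by
  have hnd := hp.support_nodup
  rw [← p.take_spec h, Walk.support_append] at hnd
  rw [Walk.support_eq_cons] at h2
  rcases List.mem_cons.mp h2 with h2 | h2
  · exact h2
  · exact absurd h2 (List.disjoint_of_nodup_append hnd h1)

lemma end_not_mem_take_aux [DecidableEq V] {u v w : V} {p : G.Walk u v} (hp : p.IsPath)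
    (h : w ∈ p.support) (hwv : w ≠ v) : v ∉ (p.takeUntil w h).support :=
  fun hv => hwv (mem_take_mem_drop_aux hp h hv (end_mem_support _)).symm

lemma mem_support_iff_tail_aux {w : V} {c : G.Walk w w} (hc : ¬ c.Nil) (v : V) :
    v ∈ c.support ↔ v ∈ c.support.tail := by
  obtain ⟨u, h, q, rfl⟩ := Walk.not_nil_iff.mp hc
  simp only [Walk.support_cons, List.tail_cons, List.mem_cons]
  constructor
  · rintro (rfl | h2)
    · exact q.end_mem_support
    · exact h2
  · exact Or.inr

lemma aux_three_arcs [DecidableEq V] {x a b c : V}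
    (A1 : G.Walk a b) (A2 : G.Walk b c) (A3 : G.Walk c a)
    (hcyc : (A1.append (A2.append A3)).IsCycle)
    (hab : a ≠ b) (hbc : b ≠ c) (hca : c ≠ a)
    (Q1 : G.Walk x a) (Q2 : G.Walk x b) (Q3 : G.Walk x c)
    (hQ1 : Q1.IsPath) (hQ2 : Q2.IsPath) (hQ3 : Q3.IsPath)
    (hQ1C : ∀ w ∈ Q1.support, w ∈ (A1.append (A2.append A3)).support → w = a)
    (hQ2C : ∀ w ∈ Q2.support, w ∈ (A1.append (A2.append A3)).support → w = b)
    (hQ3C : ∀ w ∈ Q3.support, w ∈ (A1.append (A2.append A3)).support → w = c)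
    (hxW : x ∉ (A1.append (A2.append A3)).support)
    (hQ12 : ∀ w, w ∈ Q1.support → w ∈ Q2.support → w = x)
    (hQ13 : ∀ w, w ∈ Q1.support → w ∈ Q3.support → w = x)
    (hQ23 : ∀ w, w ∈ Q2.support → w ∈ Q3.support → w = x) :
    HasMinor G (⊤ : SimpleGraph (Fin 4)) := by
  set W := A1.append (A2.append A3) with hWdef
  -- nodup structure of the cycle
  have hWt : W.support.tail = A1.support.tail ++ (A2.support.tail ++ A3.support.tail) := by
    rw [hWdef, Walk.tail_support_append, Walk.tail_support_append]
  have hnd := hcyc.support_nodup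
  rw [hWt] at hnd
  obtain ⟨hnd1, hnd23, disj1⟩ := List.nodup_append'.mp hnd
  obtain ⟨hnd2, hnd3, d23⟩ := List.nodup_append'.mp hnd23
  have d12 : A1.support.tail.Disjoint A2.support.tail :=
    fun z h1 h2 => disj1 h1 (List.mem_append_left _ h2)
  have d13 : A1.support.tail.Disjoint A3.support.tail :=
    fun z h1 h2 => disj1 h1 (List.mem_append_right _ h2)
  have hbT1 : b ∈ A1.support.tail := Walk.end_mem_tail_support_of_ne hab A1
  have hcT2 : c ∈ A2.support.tail := Walk.end_mem_tail_support_of_ne hbc A2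
  have haT3 : a ∈ A3.support.tail := Walk.end_mem_tail_support_of_ne hca A3
  have s1 : A1.support = a :: A1.support.tail := Walk.support_eq_cons A1
  have s2 : A2.support = b :: A2.support.tail := Walk.support_eq_cons A2
  have s3 : A3.support = c :: A3.support.tail := Walk.support_eq_cons A3
  -- pairwise intersections of arcs
  have h12 : ∀ z, z ∈ A1.support → z ∈ A2.support → z = b := by
    intro z h1 h2
    rw [s1, List.mem_cons] at h1; rw [s2, List.mem_cons] at h2
    rcases h2 with rfl | h2
    · rfl
    rcases h1 with rfl | h1
    · exact absurd h2 (fun hh => d23 hh haT3)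
    · exact absurd h2 (d12 h1)
  have h23 : ∀ z, z ∈ A2.support → z ∈ A3.support → z = c := by
    intro z h1 h2
    rw [s2, List.mem_cons] at h1; rw [s3, List.mem_cons] at h2
    rcases h2 with rfl | h2
    · rfl
    rcases h1 with rfl | h1
    · exact absurd h2 (fun hh => d13 hbT1 hh)
    · exact absurd h2 (d23 h1)
  have h31 : ∀ z, z ∈ A3.support → z ∈ A1.support → z = a := by
    intro z h1 h2
    rw [s3, List.mem_cons] at h1; rw [s1, List.mem_cons] at h2
    rcases h2 with rfl | h2
    · rfl
    rcases h1 with rfl | h1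
    · exact absurd h2 (fun hh => d12 hh hcT2)
    · exact absurd h2 (fun hh => d13 hh h1)
  -- arc supports sit inside the cycle support
  have hA1W : ∀ z ∈ A1.support, z ∈ W.support := by
    intro z h
    rw [hWdef, Walk.mem_support_append_iff]; exact Or.inl h
  have hA2W : ∀ z ∈ A2.support, z ∈ W.support := by
    intro z h
    rw [hWdef, Walk.mem_support_append_iff, Walk.mem_support_append_iff]
    exact Or.inr (Or.inl h)
  have hA3W : ∀ z ∈ A3.support, z ∈ W.support := by
    intro z h
    rw [hWdef, Walk.mem_support_append_iff, Walk.mem_support_append_iff]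
    exact Or.inr (Or.inr h)
  have hx1 : x ≠ a := fun h => hxW (h ▸ hA1W a A1.start_mem_support)
  have hx2 : x ≠ b := fun h => hxW (h ▸ hA2W b A2.start_mem_support)
  have hx3 : x ≠ c := fun h => hxW (h ▸ hA3W c A3.start_mem_support)
  -- second vertices of the arcs
  obtain ⟨a2, ha2, q1, hq1⟩ := Walk.not_nil_iff.mp (Walk.not_nil_of_ne (p := A1) hab)
  obtain ⟨b2, hb2, q2, hq2⟩ := Walk.not_nil_iff.mp (Walk.not_nil_of_ne (p := A2) hbc)
  obtain ⟨c2, hc2, q3, hq3⟩ := Walk.not_nil_iff.mp (Walk.not_nil_of_ne (p := A3) hca)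
  -- penultimate vertices of the three fan paths
  obtain ⟨u1, hu1, r1, hr1⟩ := Walk.not_nil_iff.mp (Walk.not_nil_of_ne (Ne.symm hx1)
    : ¬ Q1.reverse.Nil)
  obtain ⟨u2, hu2, r2, hr2⟩ := Walk.not_nil_iff.mp (Walk.not_nil_of_ne (Ne.symm hx2)
    : ¬ Q2.reverse.Nil)
  obtain ⟨u3, hu3, r3, hr3⟩ := Walk.not_nil_iff.mp (Walk.not_nil_of_ne (Ne.symm hx3)
    : ¬ Q3.reverse.Nil)
  have hu1mem : u1 ∈ Q1.support := by
    have : u1 ∈ Q1.reverse.support := by rw [hr1]; simp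
    rwa [Walk.support_reverse, List.mem_reverse] at this
  have hu2mem : u2 ∈ Q2.support := by
    have : u2 ∈ Q2.reverse.support := by rw [hr2]; simp
    rwa [Walk.support_reverse, List.mem_reverse] at this
  have hu3mem : u3 ∈ Q3.support := by
    have : u3 ∈ Q3.reverse.support := by rw [hr3]; simp
    rwa [Walk.support_reverse, List.mem_reverse] at this
  -- the four branch sets
  set S1 : Set V := {z | z ∈ A1.support ∧ z ≠ a} with hS1def
  set S2 : Set V := {z | z ∈ A2.support ∧ z ≠ b} with hS2def
  set S3 : Set V := {z | z ∈ A3.support ∧ z ≠ c} with hS3def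
  set S4 : Set V := {z | (z ∈ Q1.support ∧ z ≠ a) ∨ (z ∈ Q2.support ∧ z ≠ b) ∨
      (z ∈ Q3.support ∧ z ≠ c)} with hS4def
  have hbS1 : b ∈ S1 := ⟨A1.end_mem_support, Ne.symm hab⟩
  have hcS2 : c ∈ S2 := ⟨A2.end_mem_support, Ne.symm hbc⟩
  have haS3 : a ∈ S3 := ⟨A3.end_mem_support, Ne.symm hca⟩
  have hxS4 : x ∈ S4 := Or.inl ⟨Q1.start_mem_support, hx1⟩
  have ha2S1 : a2 ∈ S1 := ⟨by rw [hq1]; simp, ha2.ne'⟩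
  have hb2S2 : b2 ∈ S2 := ⟨by rw [hq2]; simp, hb2.ne'⟩
  have hc2S3 : c2 ∈ S3 := ⟨by rw [hq3]; simp, hc2.ne'⟩
  have hu1S4 : u1 ∈ S4 := Or.inl ⟨hu1mem, hu1.ne'⟩
  have hu2S4 : u2 ∈ S4 := Or.inr (Or.inl ⟨hu2mem, hu2.ne'⟩)
  have hu3S4 : u3 ∈ S4 := Or.inr (Or.inr ⟨hu3mem, hu3.ne'⟩)
  -- disjointness
  have DW4 : ∀ z, z ∈ W.support → z ∉ S4 := by
    intro z hzW hz4
    rcases hz4 with ⟨h, hn⟩ | ⟨h, hn⟩ | ⟨h, hn⟩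
    exacts [hn (hQ1C z h hzW), hn (hQ2C z h hzW), hn (hQ3C z h hzW)]
  have D12 : Disjoint S1 S2 := Set.disjoint_left.mpr fun z hz hz' => hz'.2 (h12 z hz.1 hz'.1)
  have D23 : Disjoint S2 S3 := Set.disjoint_left.mpr fun z hz hz' => hz'.2 (h23 z hz.1 hz'.1)
  have D13 : Disjoint S1 S3 := Set.disjoint_left.mpr fun z hz hz' => hz.2 (h31 z hz'.1 hz.1)
  have D14 : Disjoint S1 S4 := Set.disjoint_left.mpr fun z hz hz' => DW4 z (hA1W z hz.1) hz'
  have D24 : Disjoint S2 S4 := Set.disjoint_left.mpr fun z hz hz' => DW4 z (hA2W z hz.1) hz'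
  have D34 : Disjoint S3 S4 := Set.disjoint_left.mpr fun z hz hz' => DW4 z (hA3W z hz.1) hz'
  -- connectivity of the arc branch sets
  have haT1 : a ∉ A1.support.tail := fun h => d13 h haT3
  have hbT2 : b ∉ A2.support.tail := fun h => d12 hbT1 h
  have hcT3 : c ∉ A3.support.tail := fun h => d23 hcT2 h
  have hT1 : A1.support.tail = q1.support := by rw [hq1]; simp
  have hT2 : A2.support.tail = q2.support := by rw [hq2]; simp
  have hT3 : A3.support.tail = q3.support := by rw [hq3]; simp
  have hS1eq : S1 = {z | z ∈ q1.support} := by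
    ext z
    constructor
    · rintro ⟨hz, hza⟩
      rw [s1, List.mem_cons] at hz
      exact hT1 ▸ hz.resolve_left hza
    · intro hz
      exact ⟨by rw [s1, hT1]; exact List.mem_cons_of_mem _ hz,
        fun h => (hT1 ▸ haT1) (h ▸ hz)⟩
  have hS2eq : S2 = {z | z ∈ q2.support} := by
    ext z
    constructor
    · rintro ⟨hz, hza⟩
      rw [s2, List.mem_cons] at hz
      exact hT2 ▸ hz.resolve_left hza
    · intro hz
      exact ⟨by rw [s2, hT2]; exact List.mem_cons_of_mem _ hz,
        fun h => (hT2 ▸ hbT2) (h ▸ hz)⟩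
  have hS3eq : S3 = {z | z ∈ q3.support} := by
    ext z
    constructor
    · rintro ⟨hz, hza⟩
      rw [s3, List.mem_cons] at hz
      exact hT3 ▸ hz.resolve_left hza
    · intro hz
      exact ⟨by rw [s3, hT3]; exact List.mem_cons_of_mem _ hz,
        fun h => (hT3 ▸ hcT3) (h ▸ hz)⟩
  have hS1conn : (G.induce S1).Connected := hS1eq ▸ q1.connected_induce_support
  have hS2conn : (G.induce S2).Connected := hS2eq ▸ q2.connected_induce_support
  have hS3conn : (G.induce S3).Connected := hS3eq ▸ q3.connected_induce_support
  -- connectivity of the fan branch set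
  have key : ∀ z (hz : z ∈ S4), (G.induce S4).Reachable ⟨x, hxS4⟩ ⟨z, hz⟩ := by
    intro z hz
    rcases hz with ⟨hzQ, hzn⟩ | ⟨hzQ, hzn⟩ | ⟨hzQ, hzn⟩
    · have hsub : ∀ y ∈ (Q1.takeUntil z hzQ).support, y ∈ S4 := by
        intro y hy
        refine Or.inl ⟨Q1.support_takeUntil_subset hzQ hy, fun h => ?_⟩
        exact end_not_mem_take_aux hQ1 hzQ hzn (h ▸ hy)
      exact reach_induce_aux (Q1.takeUntil z hzQ) hsub
    · have hsub : ∀ y ∈ (Q2.takeUntil z hzQ).support, y ∈ S4 := by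
        intro y hy
        refine Or.inr (Or.inl ⟨Q2.support_takeUntil_subset hzQ hy, fun h => ?_⟩)
        exact end_not_mem_take_aux hQ2 hzQ hzn (h ▸ hy)
      exact reach_induce_aux (Q2.takeUntil z hzQ) hsub
    · have hsub : ∀ y ∈ (Q3.takeUntil z hzQ).support, y ∈ S4 := by
        intro y hy
        refine Or.inr (Or.inr ⟨Q3.support_takeUntil_subset hzQ hy, fun h => ?_⟩)
        exact end_not_mem_take_aux hQ3 hzQ hzn (h ▸ hy)
      exact reach_induce_aux (Q3.takeUntil z hzQ) hsub
  have hS4conn : (G.induce S4).Connected := by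
    have : Nonempty ↑S4 := ⟨⟨x, hxS4⟩⟩
    refine ⟨fun y z => ?_⟩
    obtain ⟨y, hy⟩ := y
    obtain ⟨z, hz⟩ := z
    exact (key y hy).symm.trans (key z hz)
  -- assemble the minor
  refine ⟨![S1, S2, S3, S4], ?_, ?_, ?_, ?_⟩
  · intro i
    fin_cases i
    · exact ⟨b, hbS1⟩
    · exact ⟨c, hcS2⟩
    · exact ⟨a, haS3⟩
    · exact ⟨x, hxS4⟩
  · intro i j hij
    fin_cases i <;> fin_cases j <;>
      first
        | exact absurd rfl hij
        | exact D12 | exact D13 | exact D14 | exact D23 | exact D24 | exact D34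
        | exact D12.symm | exact D13.symm | exact D14.symm
        | exact D23.symm | exact D24.symm | exact D34.symm
  · intro i
    fin_cases i
    · exact hS1conn
    · exact hS2conn
    · exact hS3conn
    · exact hS4conn
  · intro i j hadj
    fin_cases i <;> fin_cases j <;> simp only [SimpleGraph.top_adj] at hadj <;>
      first
        | exact absurd rfl hadj
        | exact ⟨b, hbS1, b2, hb2S2, hb2⟩
        | exact ⟨a2, ha2S1, a, haS3, ha2.symm⟩
        | exact ⟨b, hbS1, u2, hu2S4, hu2⟩
        | exact ⟨c, hcS2, c2, hc2S3, hc2⟩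
        | exact ⟨b2, hb2S2, b, hbS1, hb2.symm⟩
        | exact ⟨c, hcS2, u3, hu3S4, hu3⟩
        | exact ⟨a, haS3, a2, ha2S1, ha2⟩
        | exact ⟨c2, hc2S3, c, hcS2, hc2.symm⟩
        | exact ⟨a, haS3, u1, hu1S4, hu1⟩
        | exact ⟨u2, hu2S4, b, hbS1, hu2.symm⟩
        | exact ⟨u3, hu3S4, c, hcS2, hu3.symm⟩
        | exact ⟨u1, hu1S4, a, haS3, hu1.symm⟩

end Helpers

/-- Let `G` be a finite graph containing a cycle `C` and a vertex `x`
not on `C`, with three paths from `x` to `C` that pairwise meet only in `x`, each meeting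
`C` only in its endpoint on `C`, these three endpoints being distinct. Then `G` contains
`K_4` as a minor. -/
theorem hasK4Minor_of_three_fan_paths {V : Type*} [Fintype V] (G : SimpleGraph V)
    (v₀ : V) (C : G.Walk v₀ v₀) (hC : C.IsCycle)
    (x : V) (hx : x ∉ C.support)
    (e : Fin 3 → V) (he : Function.Injective e) (heC : ∀ i, e i ∈ C.support)
    (P : (i : Fin 3) → G.Walk x (e i))
    (hP : ∀ i, (P i).IsPath)
    -- each path meets `C` only in its endpoint on `C`
    (hPC : ∀ i, ∀ w ∈ (P i).support, w ∈ C.support → w = e i)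
    -- the paths pairwise intersect only in `x`
    (hPP : ∀ i j, i ≠ j → ∀ w, w ∈ (P i).support → w ∈ (P j).support → w = x) :
    HasMinor G (⊤ : SimpleGraph (Fin 4)) := by
  classical
  have h0 : e 0 ∈ C.support := heC 0
  set C' := C.rotate _ h0 with hC'def
  have hC' : C'.IsCycle := hC.rotate h0
  have hmem : ∀ v, v ∈ C'.support ↔ v ∈ C.support := by
    intro v
    rw [mem_support_iff_tail_aux hC'.not_nil, mem_support_iff_tail_aux hC.not_nil,
      (Walk.support_rotate C _ h0).mem_iff]
  obtain ⟨vv, hadj, p, hp⟩ := Walk.not_nil_iff.mp hC'.not_nil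
  have hpnd : p.support.Nodup := by
    have := hC'.support_nodup
    rwa [hp, Walk.support_cons, List.tail_cons] at this
  have hppath : p.IsPath := Walk.IsPath.mk' hpnd
  have he01 : e 0 ≠ e 1 := he.ne (by decide)
  have he02 : e 0 ≠ e 2 := he.ne (by decide)
  have he12 : e 1 ≠ e 2 := he.ne (by decide)
  have h1p : e 1 ∈ p.support := by
    have h1 : e 1 ∈ C'.support := (hmem _).mpr (heC 1)
    rw [hp, Walk.support_cons, List.mem_cons] at h1
    exact h1.resolve_left (Ne.symm he01)
  have h2C' : e 2 ∈ C'.support := (hmem _).mpr (heC 2)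
  have h2p : e 2 ∈ p.support := by
    rw [hp, Walk.support_cons, List.mem_cons] at h2C'
    exact h2C'.resolve_left (Ne.symm he02)
  rw [← p.take_spec h1p, Walk.mem_support_append_iff] at h2p
  rcases h2p with h2t | h2d
  · -- e 2 lies on the arc from the start to e 1
    set t := p.takeUntil (e 1) h1p with htdef
    have hW : ((Walk.cons hadj (t.takeUntil (e 2) h2t)).append
        ((t.dropUntil (e 2) h2t).append (p.dropUntil (e 1) h1p))) = C' := by
      rw [Walk.cons_append, Walk.append_assoc, t.take_spec h2t, htdef, p.take_spec h1p]
      exact hp.symm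
    have hWsup : ∀ v, v ∈ ((Walk.cons hadj (t.takeUntil (e 2) h2t)).append
        ((t.dropUntil (e 2) h2t).append (p.dropUntil (e 1) h1p))).support ↔ v ∈ C.support := by
      intro v; rw [hW]; exact hmem v
    refine aux_three_arcs (x := x) _ _ _ (hW ▸ hC') he02 (Ne.symm he12) he01.symm
      (P 0) (P 2) (P 1) (hP 0) (hP 2) (hP 1)
      (fun w hw hwW => hPC 0 w hw ((hWsup w).mp hwW))
      (fun w hw hwW => hPC 2 w hw ((hWsup w).mp hwW))
      (fun w hw hwW => hPC 1 w hw ((hWsup w).mp hwW))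
      (fun hh => hx ((hWsup x).mp hh))
      (hPP 0 2 (by decide)) (hPP 0 1 (by decide)) (hPP 2 1 (by decide))
  · -- e 2 lies on the arc from e 1 back to the start
    set d := p.dropUntil (e 1) h1p with hddef
    have hW : ((Walk.cons hadj (p.takeUntil (e 1) h1p)).append
        ((d.takeUntil (e 2) h2d).append (d.dropUntil (e 2) h2d))) = C' := by
      rw [Walk.cons_append, d.take_spec h2d, hddef, p.take_spec h1p]
      exact hp.symm
    have hWsup : ∀ v, v ∈ ((Walk.cons hadj (p.takeUntil (e 1) h1p)).append
        ((d.takeUntil (e 2) h2d).append (d.dropUntil (e 2) h2d))).support ↔ v ∈ C.support := by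
      intro v; rw [hW]; exact hmem v
    refine aux_three_arcs (x := x) _ _ _ (hW ▸ hC') he01 he12 (Ne.symm he02)
      (P 0) (P 1) (P 2) (hP 0) (hP 1) (hP 2)
      (fun w hw hwW => hPC 0 w hw ((hWsup w).mp hwW))
      (fun w hw hwW => hPC 1 w hw ((hWsup w).mp hwW))
      (fun w hw hwW => hPC 2 w hw ((hWsup w).mp hwW))
      (fun hh => hx ((hWsup x).mp hh))
      (hPP 0 1 (by decide)) (hPP 0 2 (by decide)) (hPP 1 2 (by decide))
end

section
/- Let G be a finite 2-connected graph with pathwidth at most 2 and let C be a longest cycle of G. Then every C-path in G has at most one internal vertex, and if a C-path has an internal vertex, that vertex has degree 2 in G. -/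
/-- The pathwidth of `G` is at most `w`: there is a path-decomposition, given by bags
indexed along a path `Fin n`, covering all vertices and edges, such that the set of bags
containing any fixed vertex is consecutive, with every bag of size at most `w + 1`. -/
def PathwidthLE {V : Type*} (G : SimpleGraph V) (w : ℕ) : Prop :=
  ∃ (n : ℕ) (B : Fin n → Set V),
    (∀ v, ∃ i, v ∈ B i) ∧
    (∀ u v, G.Adj u v → ∃ i, u ∈ B i ∧ v ∈ B i) ∧
    (∀ v (i j k : Fin n), i ≤ j → j ≤ k → v ∈ B i → v ∈ B k → v ∈ B j) ∧
    (∀ i, (B i).ncard ≤ w + 1)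

/-- `G` is 2-connected: it is connected, has at least 3 vertices, and remains connected
after deleting any single vertex. -/
def TwoConnected {V : Type*} (G : SimpleGraph V) : Prop :=
  G.Connected ∧ 3 ≤ Nat.card V ∧ ∀ v : V, (G.induce {u | u ≠ v}).Connected


namespace CPaux
open SimpleGraph

variable {V : Type*} {G : SimpleGraph V} {m : ℕ}

/-- Chain lemma: walking from a vertex in bag `j1` to a vertex in bag `j3`, some vertex
of the walk lies in any intermediate bag `j2`. -/
lemma chain_bag (B : Fin m → Set V)
    (he : ∀ u v, G.Adj u v → ∃ i, u ∈ B i ∧ v ∈ B i)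
    (hint : ∀ v (i j k : Fin m), i ≤ j → j ≤ k → v ∈ B i → v ∈ B k → v ∈ B j) :
    ∀ {z1 z3 : V} (W : G.Walk z1 z3) (j1 j2 j3 : Fin m), j1 ≤ j2 → j2 ≤ j3 →
      z1 ∈ B j1 → z3 ∈ B j3 → ∃ z ∈ W.support, z ∈ B j2 := by
  intro z1 z3 W
  induction W with
  | nil =>
    intro j1 j2 j3 h12 h23 h1 h3
    exact ⟨_, by simp, hint _ j1 j2 j3 h12 h23 h1 h3⟩
  | @cons a b c hab p ih =>
    intro j1 j2 j3 h12 h23 h1 h3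
    obtain ⟨k, hk1, hk2⟩ := he a b hab
    rcases le_or_gt j2 k with hk | hk
    · exact ⟨a, by simp, hint _ j1 j2 k h12 hk h1 hk1⟩
    · obtain ⟨z, hz, hzb⟩ := ih k j2 j3 hk.le h23 hk2 h3
      exact ⟨z, by simp [hz], hzb⟩

lemma exists_walk_in_support [DecidableEq V] {s t : V} (w : G.Walk s t) {z1 z3 : V}
    (h1 : z1 ∈ w.support) (h3 : z3 ∈ w.support) :
    ∃ W : G.Walk z1 z3, ∀ z ∈ W.support, z ∈ w.support := by
  have hspec := w.take_spec h1
  have h3' : z3 ∈ ((w.takeUntil z1 h1).append (w.dropUntil z1 h1)).support := by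
    rw [hspec]; exact h3
  rw [SimpleGraph.Walk.support_append, List.mem_append] at h3'
  rcases h3' with h3' | h3'
  · have h3r : z3 ∈ (w.takeUntil z1 h1).reverse.support := by
      rwa [SimpleGraph.Walk.support_reverse, List.mem_reverse]
    refine ⟨(w.takeUntil z1 h1).reverse.takeUntil z3 h3r, fun z hz => ?_⟩
    have := SimpleGraph.Walk.support_takeUntil_subset _ h3r hz
    rw [SimpleGraph.Walk.support_reverse, List.mem_reverse] at this
    exact SimpleGraph.Walk.support_takeUntil_subset _ h1 this
  · have h3d : z3 ∈ (w.dropUntil z1 h1).support := List.mem_of_mem_tail h3'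
    refine ⟨(w.dropUntil z1 h1).takeUntil z3 h3d, fun z hz => ?_⟩
    exact SimpleGraph.Walk.support_dropUntil_subset _ h1
      (SimpleGraph.Walk.support_takeUntil_subset _ h3d hz)

/-- The set of bags meeting the support of a walk forms an interval. -/
lemma walk_support_interval (B : Fin m → Set V)
    (he : ∀ u v, G.Adj u v → ∃ i, u ∈ B i ∧ v ∈ B i)
    (hint : ∀ v (i j k : Fin m), i ≤ j → j ≤ k → v ∈ B i → v ∈ B k → v ∈ B j)
    {s t : V} (w : G.Walk s t) :
    ∀ j1 j2 j3 : Fin m, j1 ≤ j2 → j2 ≤ j3 →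
      (∃ z ∈ w.support, z ∈ B j1) → (∃ z ∈ w.support, z ∈ B j3) →
      ∃ z ∈ w.support, z ∈ B j2 := by
  classical
  rintro j1 j2 j3 h12 h23 ⟨z1, hz1, hb1⟩ ⟨z3, hz3, hb3⟩
  obtain ⟨W, hW⟩ := exists_walk_in_support w hz1 hz3
  obtain ⟨z, hz, hb⟩ := chain_bag B he hint W j1 j2 j3 h12 h23 hb1 hb3
  exact ⟨z, hW z hz, hb⟩

lemma four_in_bag {S : Set V} (hfin : S.Finite) (hc : S.ncard ≤ 3) {p1 p2 p3 p4 : V}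
    (h1 : p1 ∈ S) (h2 : p2 ∈ S) (h3 : p3 ∈ S) (h4 : p4 ∈ S)
    (h12 : p1 ≠ p2) (h13 : p1 ≠ p3) (h14 : p1 ≠ p4)
    (h23 : p2 ≠ p3) (h24 : p2 ≠ p4) (h34 : p3 ≠ p4) : False := by
  have hsub : ({p1, p2, p3, p4} : Set V) ⊆ S := by
    intro z hz
    rcases hz with rfl | rfl | rfl | rfl <;> assumption
  have hcard : ({p1, p2, p3, p4} : Set V).ncard = 4 := by
    rw [Set.ncard_insert_of_notMem (by simp [h12, h13, h14]) (Set.toFinite _),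
        Set.ncard_insert_of_notMem (by simp [h23, h24]) (Set.toFinite _),
        Set.ncard_insert_of_notMem (by simp [h34]) (Set.toFinite _),
        Set.ncard_singleton]
  have := Set.ncard_le_ncard hsub hfin
  omega

/-- Width ≤ 2 path decompositions admit no "K₄ structure": four disjoint nonempty
connected (interval) sets pairwise joined by edges. -/
lemma K4_free (B : Fin m → Set V)
    (hv : ∀ v, ∃ i, v ∈ B i)
    (he : ∀ u v, G.Adj u v → ∃ i, u ∈ B i ∧ v ∈ B i)
    (hcard : ∀ i, (B i).ncard ≤ 3) (hfin : ∀ i, (B i).Finite)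
    (M : Fin 4 → Set V)
    (hne : ∀ i, (M i).Nonempty)
    (hMint : ∀ i, ∀ j1 j2 j3 : Fin m, j1 ≤ j2 → j2 ≤ j3 →
        (∃ z ∈ M i, z ∈ B j1) → (∃ z ∈ M i, z ∈ B j3) → ∃ z ∈ M i, z ∈ B j2)
    (hdisj : ∀ i j, i ≠ j → ∀ z, z ∈ M i → z ∈ M j → False)
    (hadj : ∀ i j, i ≠ j → ∃ p q, p ∈ M i ∧ q ∈ M j ∧ G.Adj p q) : False := by
  classical
  set T : Fin 4 → Finset (Fin m) :=
    fun i => Finset.univ.filter (fun t => ∃ z ∈ M i, z ∈ B t) with hT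
  have hmemT : ∀ i t, t ∈ T i ↔ ∃ z ∈ M i, z ∈ B t := by
    intro i t; simp [hT]
  have hTne : ∀ i, (T i).Nonempty := by
    intro i
    obtain ⟨z, hz⟩ := hne i
    obtain ⟨t, ht⟩ := hv z
    exact ⟨t, (hmemT i t).2 ⟨z, hz, ht⟩⟩
  have hmeet : ∀ i j, i ≠ j → ∃ t, t ∈ T i ∧ t ∈ T j := by
    intro i j hij
    obtain ⟨p, q, hp, hq, hpq⟩ := hadj i j hij
    obtain ⟨t, ht1, ht2⟩ := he p q hpq
    exact ⟨t, (hmemT i t).2 ⟨p, hp, ht1⟩, (hmemT j t).2 ⟨q, hq, ht2⟩⟩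
  obtain ⟨i0, -, hi0⟩ := Finset.exists_max_image Finset.univ
    (fun i => (T i).min' (hTne i)) ⟨0, Finset.mem_univ 0⟩
  set t : Fin m := (T i0).min' (hTne i0) with htdef
  have hin : ∀ i, t ∈ T i := by
    intro i
    by_cases hii : i = i0
    · subst hii; exact Finset.min'_mem _ _
    · obtain ⟨s, hsi, hsi0⟩ := hmeet i i0 hii
      have hle1 : (T i).min' (hTne i) ≤ t := hi0 i (Finset.mem_univ i)
      have hle2 : t ≤ s := Finset.min'_le _ _ hsi0
      have := hMint i ((T i).min' (hTne i)) t s hle1 hle2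
        ((hmemT i _).1 (Finset.min'_mem _ _)) ((hmemT i _).1 hsi)
      exact (hmemT i t).2 this
  obtain ⟨z0, hz0, hb0⟩ := (hmemT 0 t).1 (hin 0)
  obtain ⟨z1, hz1, hb1⟩ := (hmemT 1 t).1 (hin 1)
  obtain ⟨z2, hz2, hb2⟩ := (hmemT 2 t).1 (hin 2)
  obtain ⟨z3, hz3, hb3⟩ := (hmemT 3 t).1 (hin 3)
  have hne' : ∀ (i j : Fin 4) (zi zj : V), i ≠ j → zi ∈ M i → zj ∈ M j → zi ≠ zj := by
    intro i j zi zj hij hzi hzj h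
    exact hdisj i j hij zi hzi (h ▸ hzj)
  exact four_in_bag (hfin t) (hcard t) hb0 hb1 hb2 hb3
    (hne' 0 1 _ _ (by decide) hz0 hz1) (hne' 0 2 _ _ (by decide) hz0 hz2)
    (hne' 0 3 _ _ (by decide) hz0 hz3) (hne' 1 2 _ _ (by decide) hz1 hz2)
    (hne' 1 3 _ _ (by decide) hz1 hz3) (hne' 2 3 _ _ (by decide) hz2 hz3)


/-- Width ≤ 2 path decompositions admit no "θ(3,3,3) structure": two vertices `u ≠ v`
and three disjoint connected sets, each adjacent to both `u` and `v` and each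
containing an edge. -/
lemma theta_free (B : Fin m → Set V)
    (hv : ∀ v, ∃ i, v ∈ B i)
    (he : ∀ u v, G.Adj u v → ∃ i, u ∈ B i ∧ v ∈ B i)
    (hint : ∀ v (i j k : Fin m), i ≤ j → j ≤ k → v ∈ B i → v ∈ B k → v ∈ B j)
    (hcard : ∀ i, (B i).ncard ≤ 3) (hfin : ∀ i, (B i).Finite)
    {u v : V} (huv : u ≠ v)
    (M : Fin 3 → Set V)
    (hMint : ∀ i, ∀ j1 j2 j3 : Fin m, j1 ≤ j2 → j2 ≤ j3 →
        (∃ z ∈ M i, z ∈ B j1) → (∃ z ∈ M i, z ∈ B j3) → ∃ z ∈ M i, z ∈ B j2)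
    (hxu : ∀ i, ∃ x ∈ M i, G.Adj u x)
    (hyv : ∀ i, ∃ y ∈ M i, G.Adj v y)
    (hedge : ∀ i, ∃ p q, p ∈ M i ∧ q ∈ M i ∧ G.Adj p q)
    (hdisj : ∀ i j, i ≠ j → ∀ z, z ∈ M i → z ∈ M j → False)
    (huM : ∀ i, u ∉ M i) (hvM : ∀ i, v ∉ M i) : False := by
  classical
  have key2 : ∀ (t : Fin m) (i j : Fin 3), i ≠ j → u ∈ B t → v ∈ B t →
      (∃ z ∈ M i, z ∈ B t) → (∃ z ∈ M j, z ∈ B t) → False := by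
    rintro t i j hij hu hv' ⟨zi, hzi, hbi⟩ ⟨zj, hzj, hbj⟩
    refine four_in_bag (hfin t) (hcard t) hu hv' hbi hbj huv ?_ ?_ ?_ ?_ ?_
    · exact fun h => huM i (h ▸ hzi)
    · exact fun h => huM j (h ▸ hzj)
    · exact fun h => hvM i (h ▸ hzi)
    · exact fun h => hvM j (h ▸ hzj)
    · exact fun h => hdisj i j hij zi hzi (h ▸ hzj)
  have ha : ∀ i, ∃ t, u ∈ B t ∧ ∃ z ∈ M i, z ∈ B t := by
    intro i
    obtain ⟨x, hx, hadj⟩ := hxu i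
    obtain ⟨t, ht1, ht2⟩ := he u x hadj
    exact ⟨t, ht1, x, hx, ht2⟩
  have hb : ∀ i, ∃ t, v ∈ B t ∧ ∃ z ∈ M i, z ∈ B t := by
    intro i
    obtain ⟨y, hy, hadj⟩ := hyv i
    obtain ⟨t, ht1, ht2⟩ := he v y hadj
    exact ⟨t, ht1, y, hy, ht2⟩
  by_cases hT : ∃ t, u ∈ B t ∧ v ∈ B t
  · -- Case 1: some bag contains both u and v
    obtain ⟨t0, ht0u, ht0v⟩ := hT
    have hS : ∀ i : Fin 3, ∃ s : Fin m, u ∈ B s ∧ v ∈ B s ∧ ∃ z ∈ M i, z ∈ B s := by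
      intro i
      obtain ⟨ai, hau, hzi⟩ := ha i
      obtain ⟨bi, hbv, hwi⟩ := hb i
      by_cases hva : v ∈ B ai
      · exact ⟨ai, hau, hva, hzi⟩
      by_cases hub : u ∈ B bi
      · exact ⟨bi, hub, hbv, hwi⟩
      rcases le_total ai bi with hab | hab
      · rcases le_or_gt t0 ai with h1 | h1
        · exact absurd (hint v t0 ai bi h1 hab ht0v hbv) hva
        · rcases le_or_gt t0 bi with h2 | h2
          · exact ⟨t0, ht0u, ht0v, hMint i ai t0 bi h1.le h2 hzi hwi⟩
          · exact absurd (hint u ai bi t0 hab h2.le hau ht0u) hub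
      · rcases le_or_gt t0 bi with h1 | h1
        · exact absurd (hint u t0 bi ai h1 hab ht0u hau) hub
        · rcases le_or_gt t0 ai with h2 | h2
          · exact ⟨t0, ht0u, ht0v, hMint i bi t0 ai h1.le h2 hwi hzi⟩
          · exact absurd (hint v bi ai t0 hab h2.le hbv ht0v) hva
    choose s hsu hsv hsM using hS
    have hsne : ∀ i j, i ≠ j → s i ≠ s j := by
      intro i j hij h
      exact key2 (s i) i j hij (hsu i) (hsv i) (hsM i) (h ▸ hsM j)
    have middle : ∀ i j k : Fin 3, i ≠ j → j ≠ k → i ≠ k →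
        s i < s j → s j < s k → False := by
      intro i j k hij hjk hik h1 h2
      have hsub : ∀ r : Fin m, (∃ z ∈ M j, z ∈ B r) → u ∈ B r ∧ v ∈ B r := by
        intro r hr
        rcases le_or_gt r (s j) with hrs | hrs
        · rcases le_or_gt (s i) r with hir | hir
          · exact ⟨hint u (s i) r (s j) hir hrs (hsu i) (hsu j),
                   hint v (s i) r (s j) hir hrs (hsv i) (hsv j)⟩
          · exact (key2 (s i) i j hij (hsu i) (hsv i) (hsM i)
              (hMint j r (s i) (s j) hir.le h1.le hr (hsM j))).elim
        · rcases le_or_gt r (s k) with hkr | hkr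
          · exact ⟨hint u (s j) r (s k) hrs.le hkr (hsu j) (hsu k),
                   hint v (s j) r (s k) hrs.le hkr (hsv j) (hsv k)⟩
          · exact (key2 (s k) j k hjk (hsu k) (hsv k)
              (hMint j (s j) (s k) r h2.le hkr.le (hsM j) hr) (hsM k)).elim
      obtain ⟨p, q, hp, hq, hpq⟩ := hedge j
      obtain ⟨r, hrp, hrq⟩ := he p q hpq
      obtain ⟨hur, hvr⟩ := hsub r ⟨p, hp, hrp⟩
      exact four_in_bag (hfin r) (hcard r) hur hvr hrp hrq huv
        (fun h => huM j (h ▸ hp)) (fun h => huM j (h ▸ hq))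
        (fun h => hvM j (h ▸ hp)) (fun h => hvM j (h ▸ hq)) hpq.ne
    rcases lt_trichotomy (s 0) (s 1) with hA | hA | hA
    · rcases lt_trichotomy (s 1) (s 2) with hB | hB | hB
      · exact middle 0 1 2 (by decide) (by decide) (by decide) hA hB
      · exact absurd hB (hsne 1 2 (by decide))
      · rcases lt_trichotomy (s 0) (s 2) with hC | hC | hC
        · exact middle 0 2 1 (by decide) (by decide) (by decide) hC hB
        · exact absurd hC (hsne 0 2 (by decide))
        · exact middle 2 0 1 (by decide) (by decide) (by decide) hC hA
    · exact absurd hA (hsne 0 1 (by decide))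
    · rcases lt_trichotomy (s 0) (s 2) with hB | hB | hB
      · exact middle 1 0 2 (by decide) (by decide) (by decide) hA hB
      · exact absurd hB (hsne 0 2 (by decide))
      · rcases lt_trichotomy (s 1) (s 2) with hC | hC | hC
        · exact middle 1 2 0 (by decide) (by decide) (by decide) hC hB
        · exact absurd hC (hsne 1 2 (by decide))
        · exact middle 2 1 0 (by decide) (by decide) (by decide) hC hA
  · -- Case 2: no bag contains both u and v
    have hT' : ∀ t : Fin m, u ∈ B t → v ∈ B t → False := fun t h1 h2 => hT ⟨t, h1, h2⟩
    set Iu : Finset (Fin m) := Finset.univ.filter (fun t => u ∈ B t) with hIu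
    set Iv : Finset (Fin m) := Finset.univ.filter (fun t => v ∈ B t) with hIv
    have hIune : Iu.Nonempty := by
      obtain ⟨t, ht⟩ := hv u; exact ⟨t, by simp [hIu, ht]⟩
    have hIvne : Iv.Nonempty := by
      obtain ⟨t, ht⟩ := hv v; exact ⟨t, by simp [hIv, ht]⟩
    set qu : Fin m := Iu.max' hIune with hqud
    set qv : Fin m := Iv.max' hIvne with hqvd
    have hqu : u ∈ B qu := (Finset.mem_filter.1 (Iu.max'_mem hIune)).2
    have hqv : v ∈ B qv := (Finset.mem_filter.1 (Iv.max'_mem hIvne)).2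
    have hquv : qu ≠ qv := fun h => hT' qu hqu (h ▸ hqv)
    rcases lt_or_gt_of_ne hquv with hlt | hlt
    · -- qu < qv : all three M's meet bag qu, plus u
      have hrep : ∀ i : Fin 3, ∃ z ∈ M i, z ∈ B qu := by
        intro i
        obtain ⟨ai, hau, hzi⟩ := ha i
        obtain ⟨bi, hbv, hwi⟩ := hb i
        have hai : ai ≤ qu := Iu.le_max' ai (by simp [hIu, hau])
        have hbi : qu < bi := by
          rcases lt_or_ge qu bi with h | h
          · exact h
          · rcases eq_or_lt_of_le h with h' | h'
            · exact absurd (h' ▸ hbv) (fun hh => hT' qu hqu hh)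
            · have hbiv : bi ≤ qv := Iv.le_max' bi (by simp [hIv, hbv])
              exact absurd (hint v bi qu qv h'.le hlt.le hbv hqv)
                (fun hh => hT' qu hqu hh)
        exact hMint i ai qu bi hai hbi.le hzi hwi
      obtain ⟨z0, hz0, hb0⟩ := hrep 0
      obtain ⟨z1, hz1, hb1⟩ := hrep 1
      obtain ⟨z2, hz2, hb2⟩ := hrep 2
      exact four_in_bag (hfin qu) (hcard qu) hqu hb0 hb1 hb2
        (fun h => huM 0 (h ▸ hz0)) (fun h => huM 1 (h ▸ hz1))
        (fun h => huM 2 (h ▸ hz2))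
        (fun h => hdisj 0 1 (by decide) z0 hz0 (h ▸ hz1))
        (fun h => hdisj 0 2 (by decide) z0 hz0 (h ▸ hz2))
        (fun h => hdisj 1 2 (by decide) z1 hz1 (h ▸ hz2))
    · -- qv < qu : mirror
      have hrep : ∀ i : Fin 3, ∃ z ∈ M i, z ∈ B qv := by
        intro i
        obtain ⟨ai, hau, hzi⟩ := ha i
        obtain ⟨bi, hbv, hwi⟩ := hb i
        have hbi : bi ≤ qv := Iv.le_max' bi (by simp [hIv, hbv])
        have hai : qv < ai := by
          rcases lt_or_ge qv ai with h | h
          · exact h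
          · rcases eq_or_lt_of_le h with h' | h'
            · exact absurd (h' ▸ hau) (fun hh => hT' qv hh hqv)
            · have haiu : ai ≤ qu := Iu.le_max' ai (by simp [hIu, hau])
              exact absurd (hint u ai qv qu h'.le hlt.le hau hqu)
                (fun hh => hT' qv hh hqv)
        exact hMint i bi qv ai hbi hai.le hwi hzi
      obtain ⟨z0, hz0, hb0⟩ := hrep 0
      obtain ⟨z1, hz1, hb1⟩ := hrep 1
      obtain ⟨z2, hz2, hb2⟩ := hrep 2
      exact four_in_bag (hfin qv) (hcard qv) hqv hb0 hb1 hb2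
        (fun h => hvM 0 (h ▸ hz0)) (fun h => hvM 1 (h ▸ hz1))
        (fun h => hvM 2 (h ▸ hz2))
        (fun h => hdisj 0 1 (by decide) z0 hz0 (h ▸ hz1))
        (fun h => hdisj 0 2 (by decide) z0 hz0 (h ▸ hz2))
        (fun h => hdisj 1 2 (by decide) z1 hz1 (h ▸ hz2))


section Walks
variable {G : SimpleGraph V}

/-- Gluing two internally disjoint paths into a cycle. -/
lemma isCycle_append {u v : V} (p : G.Walk u v) (q : G.Walk v u)
    (hp : p.IsPath) (hq : q.IsPath) (hpl : 2 ≤ p.length) (hne : u ≠ v)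
    (hmeet : ∀ y, y ∈ p.support → y ∈ q.support → y = u ∨ y = v) :
    (p.append q).IsCycle := by
  have hedge_uv : s(u, v) ∈ p.edges → False := by
    intro h
    cases p with
    | nil => simp at h
    | @cons _ b _ h' p' =>
      rw [SimpleGraph.Walk.edges_cons, List.mem_cons] at h
      rcases h with h | h
      · rcases Sym2.eq_iff.1 h with ⟨-, rfl⟩ | ⟨h1, -⟩
        · -- b = v, so p' : v → v is a path, hence nil and p.length = 1
          have hp' : p'.IsPath := ((SimpleGraph.Walk.cons_isPath_iff h' p').1 hp).1
          have : p' = SimpleGraph.Walk.nil := SimpleGraph.Walk.isPath_iff_eq_nil.1 hp'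
          subst this
          simp at hpl
        · exact h'.ne h1
      · have : u ∈ p'.support := SimpleGraph.Walk.fst_mem_support_of_mem_edges p' h
        exact ((SimpleGraph.Walk.cons_isPath_iff h' p').1 hp).2 this
  constructor
  · constructor
    · -- IsTrail : edges nodup
      constructor
      rw [SimpleGraph.Walk.edges_append]
      refine List.Nodup.append hp.isTrail.edges_nodup hq.isTrail.edges_nodup ?_
      intro e hep heq
      induction e with
      | h a b =>
        have hap : a ∈ p.support := SimpleGraph.Walk.fst_mem_support_of_mem_edges p hep
        have hbp : b ∈ p.support := SimpleGraph.Walk.snd_mem_support_of_mem_edges p hep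
        have haq : a ∈ q.support := SimpleGraph.Walk.fst_mem_support_of_mem_edges q heq
        have hbq : b ∈ q.support := SimpleGraph.Walk.snd_mem_support_of_mem_edges q heq
        have hab : G.Adj a b := SimpleGraph.Walk.adj_of_mem_edges p hep
        rcases hmeet a hap haq with rfl | rfl
        · rcases hmeet b hbp hbq with rfl | rfl
          · exact hab.ne rfl
          · exact hedge_uv hep
        · rcases hmeet b hbp hbq with rfl | rfl
          · exact hedge_uv (by rwa [Sym2.eq_swap] at hep)
          · exact hab.ne rfl
    · -- ≠ nil
      intro h
      have := congrArg SimpleGraph.Walk.length h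
      rw [SimpleGraph.Walk.length_append] at this
      simp only [SimpleGraph.Walk.length_nil] at this
      omega
  · -- support tail nodup
    have hps : p.support = u :: p.support.tail := p.support_eq_cons
    have hqs : q.support = v :: q.support.tail := q.support_eq_cons
    have htail : (p.append q).support.tail = p.support.tail ++ q.support.tail := by
      rw [SimpleGraph.Walk.support_append, hps]
      simp
    rw [htail]
    have hpnd : (u :: p.support.tail).Nodup := by rw [← hps]; exact hp.support_nodup
    have hqnd : (v :: q.support.tail).Nodup := by rw [← hqs]; exact hq.support_nodup
    refine List.Nodup.append (List.Nodup.of_cons hpnd) (List.Nodup.of_cons hqnd) ?_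
    intro y hyp hyq
    have hyp' : y ∈ p.support := by rw [hps]; exact List.mem_cons_of_mem _ hyp
    have hyq' : y ∈ q.support := by rw [hqs]; exact List.mem_cons_of_mem _ hyq
    rcases hmeet y hyp' hyq' with rfl | rfl
    · exact (List.nodup_cons.1 hpnd).1 hyp
    · exact (List.nodup_cons.1 hqnd).1 hyq

/-- First vertex on a walk satisfying a predicate (assuming the end does). -/
lemma exists_prefix_until (pr : V → Prop) :
    ∀ {s t : V} (p : G.Walk s t), pr t →
    ∃ (z : V) (p1 : G.Walk s z), pr z ∧ (∀ w ∈ p1.support, pr w → w = z) ∧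
      (∀ w ∈ p1.support, w ∈ p.support) ∧ (p.IsPath → p1.IsPath) ∧
      p1.length ≤ p.length := by
  classical
  intro s t p
  induction p with
  | nil =>
    intro h
    exact ⟨_, SimpleGraph.Walk.nil, h, by simp, by simp,
      fun _ => SimpleGraph.Walk.IsPath.nil, le_refl _⟩
  | @cons a b c h p ih =>
    intro hprt
    by_cases hs : pr a
    · refine ⟨a, SimpleGraph.Walk.nil, hs, by simp, by simp, fun _ => SimpleGraph.Walk.IsPath.nil, by simp⟩
    · obtain ⟨z, p1, h1, h2, h3, h4, h5⟩ := ih hprt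
      refine ⟨z, SimpleGraph.Walk.cons h p1, h1, ?_, ?_, ?_, by simp; omega⟩
      · intro w hw hprw
        rw [SimpleGraph.Walk.support_cons, List.mem_cons] at hw
        rcases hw with rfl | hw
        · exact absurd hprw hs
        · exact h2 w hw hprw
      · intro w hw
        rw [SimpleGraph.Walk.support_cons, List.mem_cons] at hw
        rcases hw with rfl | hw
        · simp
        · rw [SimpleGraph.Walk.support_cons]
          exact List.mem_cons_of_mem _ (h3 w hw)
      · intro hP
        rw [SimpleGraph.Walk.cons_isPath_iff] at hP ⊢
        refine ⟨h4 hP.1, fun hc => hP.2 (h3 a hc)⟩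

/-- A walk avoiding `x`, from connectivity of the induced graph on `{t | t ≠ x}`. -/
lemma exists_walk_avoiding {x y u : V}
    (hconn : (G.induce {t | t ≠ x}).Connected) (hy : y ≠ x) (hu : u ≠ x) :
    ∃ W : G.Walk y u, ∀ z ∈ W.support, z ≠ x := by
  obtain ⟨W⟩ := hconn.preconnected ⟨y, hy⟩ ⟨u, hu⟩
  refine ⟨W.map (SimpleGraph.Embedding.induce {t | t ≠ x}).toHom, ?_⟩
  intro z hz
  replace hz : z ∈ (W.map (SimpleGraph.Embedding.induce {t | t ≠ x}).toHom).support := hz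
  rw [SimpleGraph.Walk.support_map, List.mem_map] at hz
  obtain ⟨z', -, rfl⟩ := hz
  exact z'.2

end Walks

section Cyclic
variable {G : SimpleGraph V} {n : ℕ}

/-- Cyclic enumeration extended to `ℕ`. -/
def cv (hn : 0 < n) (c : Fin n → V) (k : ℕ) : V := c ⟨k % n, Nat.mod_lt _ hn⟩

lemma cv_mem_range (hn : 0 < n) (c : Fin n → V) (k : ℕ) : cv hn c k ∈ Set.range c :=
  ⟨_, rfl⟩

lemma cv_add_n (hn : 0 < n) (c : Fin n → V) (k : ℕ) : cv hn c (k + n) = cv hn c k := by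
  exact congrArg c (Fin.ext (Nat.add_mod_right k n))

lemma cv_eq_iff (hn : 0 < n) (c : Fin n → V) (hinj : Function.Injective c) (j k : ℕ) :
    cv hn c j = cv hn c k ↔ j % n = k % n := by
  constructor
  · intro h
    have := hinj h
    exact congrArg Fin.val this
  · intro h
    unfold cv
    congr 1
    exact Fin.ext h

lemma cv_offset_inj (hn : 0 < n) (c : Fin n → V) (hinj : Function.Injective c)
    {i o1 o2 : ℕ} (h1 : o1 < n) (h2 : o2 < n)
    (h : cv hn c (i + o1) = cv hn c (i + o2)) : o1 = o2 := by
  rw [cv_eq_iff hn c hinj] at h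
  have : o1 % n = o2 % n := Nat.ModEq.add_left_cancel' i h
  rwa [Nat.mod_eq_of_lt h1, Nat.mod_eq_of_lt h2] at this

/-- The walk along the cyclic enumeration, from position `i`, of length `ℓ`. -/
def cwalk (hn : 0 < n) (c : Fin n → V)
    (hadj : ∀ k : ℕ, G.Adj (cv hn c k) (cv hn c (k + 1))) :
    (i ℓ : ℕ) → G.Walk (cv hn c i) (cv hn c (i + ℓ))
  | _, 0 => SimpleGraph.Walk.nil
  | i, (ℓ + 1) => (cwalk hn c hadj i ℓ).append (SimpleGraph.Walk.cons (hadj (i + ℓ)) SimpleGraph.Walk.nil)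

lemma cwalk_length (hn : 0 < n) (c : Fin n → V)
    (hadj : ∀ k : ℕ, G.Adj (cv hn c k) (cv hn c (k + 1))) (i ℓ : ℕ) :
    (cwalk hn c hadj i ℓ).length = ℓ := by
  induction ℓ with
  | zero => rfl
  | succ ℓ ih => rw [cwalk, SimpleGraph.Walk.length_append, ih]; rfl

lemma cwalk_support (hn : 0 < n) (c : Fin n → V)
    (hadj : ∀ k : ℕ, G.Adj (cv hn c k) (cv hn c (k + 1))) (i ℓ : ℕ) :
    (cwalk hn c hadj i ℓ).support = (List.range (ℓ + 1)).map (fun t => cv hn c (i + t)) := by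
  induction ℓ with
  | zero => simp [cwalk, List.range_succ]
  | succ ℓ ih =>
    rw [cwalk, SimpleGraph.Walk.support_append, ih]
    simp [List.range_succ, Nat.add_assoc]

lemma cwalk_mem_support (hn : 0 < n) (c : Fin n → V)
    (hadj : ∀ k : ℕ, G.Adj (cv hn c k) (cv hn c (k + 1))) (i ℓ : ℕ) (z : V) :
    z ∈ (cwalk hn c hadj i ℓ).support ↔ ∃ t, t ≤ ℓ ∧ z = cv hn c (i + t) := by
  rw [cwalk_support, List.mem_map]
  constructor
  · rintro ⟨t, ht, rfl⟩
    rw [List.mem_range] at ht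
    exact ⟨t, by omega, rfl⟩
  · rintro ⟨t, ht, rfl⟩
    exact ⟨t, List.mem_range.2 (by omega), rfl⟩

lemma cwalk_isPath (hn : 0 < n) (c : Fin n → V) (hinj : Function.Injective c)
    (hadj : ∀ k : ℕ, G.Adj (cv hn c k) (cv hn c (k + 1))) (i ℓ : ℕ) (hℓ : ℓ < n) :
    (cwalk hn c hadj i ℓ).IsPath := by
  rw [SimpleGraph.Walk.isPath_def, cwalk_support]
  refine List.Nodup.map_on ?_ List.nodup_range
  intro t1 h1 t2 h2 h
  rw [List.mem_range] at h1 h2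
  exact cv_offset_inj hn c hinj (by omega) (by omega) h

end Cyclic


section Wrappers
variable {G : SimpleGraph V} {m : ℕ}

lemma K4_free4 (B : Fin m → Set V)
    (hv : ∀ v, ∃ i, v ∈ B i)
    (he : ∀ u v, G.Adj u v → ∃ i, u ∈ B i ∧ v ∈ B i)
    (hcard : ∀ i, (B i).ncard ≤ 3) (hfin : ∀ i, (B i).Finite)
    (M1 M2 M3 M4 : Set V)
    (hne1 : M1.Nonempty) (hne2 : M2.Nonempty) (hne3 : M3.Nonempty) (hne4 : M4.Nonempty)
    (hint1 : ∀ j1 j2 j3 : Fin m, j1 ≤ j2 → j2 ≤ j3 →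
        (∃ z ∈ M1, z ∈ B j1) → (∃ z ∈ M1, z ∈ B j3) → ∃ z ∈ M1, z ∈ B j2)
    (hint2 : ∀ j1 j2 j3 : Fin m, j1 ≤ j2 → j2 ≤ j3 →
        (∃ z ∈ M2, z ∈ B j1) → (∃ z ∈ M2, z ∈ B j3) → ∃ z ∈ M2, z ∈ B j2)
    (hint3 : ∀ j1 j2 j3 : Fin m, j1 ≤ j2 → j2 ≤ j3 →
        (∃ z ∈ M3, z ∈ B j1) → (∃ z ∈ M3, z ∈ B j3) → ∃ z ∈ M3, z ∈ B j2)
    (hint4 : ∀ j1 j2 j3 : Fin m, j1 ≤ j2 → j2 ≤ j3 →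
        (∃ z ∈ M4, z ∈ B j1) → (∃ z ∈ M4, z ∈ B j3) → ∃ z ∈ M4, z ∈ B j2)
    (d12 : ∀ z, z ∈ M1 → z ∈ M2 → False) (d13 : ∀ z, z ∈ M1 → z ∈ M3 → False)
    (d14 : ∀ z, z ∈ M1 → z ∈ M4 → False) (d23 : ∀ z, z ∈ M2 → z ∈ M3 → False)
    (d24 : ∀ z, z ∈ M2 → z ∈ M4 → False) (d34 : ∀ z, z ∈ M3 → z ∈ M4 → False)
    (a12 : ∃ p q, p ∈ M1 ∧ q ∈ M2 ∧ G.Adj p q) (a13 : ∃ p q, p ∈ M1 ∧ q ∈ M3 ∧ G.Adj p q)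
    (a14 : ∃ p q, p ∈ M1 ∧ q ∈ M4 ∧ G.Adj p q) (a23 : ∃ p q, p ∈ M2 ∧ q ∈ M3 ∧ G.Adj p q)
    (a24 : ∃ p q, p ∈ M2 ∧ q ∈ M4 ∧ G.Adj p q) (a34 : ∃ p q, p ∈ M3 ∧ q ∈ M4 ∧ G.Adj p q) :
    False := by
  have flip : ∀ {A A' : Set V}, (∃ p q, p ∈ A ∧ q ∈ A' ∧ G.Adj p q) →
      (∃ p q, p ∈ A' ∧ q ∈ A ∧ G.Adj p q) := by
    rintro A A' ⟨p, q, hp, hq, h⟩; exact ⟨q, p, hq, hp, h.symm⟩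
  apply K4_free B hv he hcard hfin ![M1, M2, M3, M4]
  · intro i; fin_cases i
    exacts [hne1, hne2, hne3, hne4]
  · intro i; fin_cases i
    exacts [hint1, hint2, hint3, hint4]
  · intro i j hij z h1 h2
    fin_cases i <;> fin_cases j <;>
      first
      | exact absurd rfl hij
      | exact d12 z h1 h2 | exact d12 z h2 h1
      | exact d13 z h1 h2 | exact d13 z h2 h1
      | exact d14 z h1 h2 | exact d14 z h2 h1
      | exact d23 z h1 h2 | exact d23 z h2 h1
      | exact d24 z h1 h2 | exact d24 z h2 h1
      | exact d34 z h1 h2 | exact d34 z h2 h1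
  · intro i j hij
    fin_cases i <;> fin_cases j <;>
      first
      | exact absurd rfl hij
      | exact a12 | exact flip a12
      | exact a13 | exact flip a13
      | exact a14 | exact flip a14
      | exact a23 | exact flip a23
      | exact a24 | exact flip a24
      | exact a34 | exact flip a34

lemma theta_free3 (B : Fin m → Set V)
    (hv : ∀ v, ∃ i, v ∈ B i)
    (he : ∀ u v, G.Adj u v → ∃ i, u ∈ B i ∧ v ∈ B i)
    (hint : ∀ v (i j k : Fin m), i ≤ j → j ≤ k → v ∈ B i → v ∈ B k → v ∈ B j)
    (hcard : ∀ i, (B i).ncard ≤ 3) (hfin : ∀ i, (B i).Finite)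
    {u v : V} (huv : u ≠ v) (M1 M2 M3 : Set V)
    (hint1 : ∀ j1 j2 j3 : Fin m, j1 ≤ j2 → j2 ≤ j3 →
        (∃ z ∈ M1, z ∈ B j1) → (∃ z ∈ M1, z ∈ B j3) → ∃ z ∈ M1, z ∈ B j2)
    (hint2 : ∀ j1 j2 j3 : Fin m, j1 ≤ j2 → j2 ≤ j3 →
        (∃ z ∈ M2, z ∈ B j1) → (∃ z ∈ M2, z ∈ B j3) → ∃ z ∈ M2, z ∈ B j2)
    (hint3 : ∀ j1 j2 j3 : Fin m, j1 ≤ j2 → j2 ≤ j3 →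
        (∃ z ∈ M3, z ∈ B j1) → (∃ z ∈ M3, z ∈ B j3) → ∃ z ∈ M3, z ∈ B j2)
    (hxu1 : ∃ x ∈ M1, G.Adj u x) (hxu2 : ∃ x ∈ M2, G.Adj u x) (hxu3 : ∃ x ∈ M3, G.Adj u x)
    (hyv1 : ∃ y ∈ M1, G.Adj v y) (hyv2 : ∃ y ∈ M2, G.Adj v y) (hyv3 : ∃ y ∈ M3, G.Adj v y)
    (hed1 : ∃ p q, p ∈ M1 ∧ q ∈ M1 ∧ G.Adj p q)
    (hed2 : ∃ p q, p ∈ M2 ∧ q ∈ M2 ∧ G.Adj p q)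
    (hed3 : ∃ p q, p ∈ M3 ∧ q ∈ M3 ∧ G.Adj p q)
    (d12 : ∀ z, z ∈ M1 → z ∈ M2 → False) (d13 : ∀ z, z ∈ M1 → z ∈ M3 → False)
    (d23 : ∀ z, z ∈ M2 → z ∈ M3 → False)
    (hu1 : u ∉ M1) (hu2 : u ∉ M2) (hu3 : u ∉ M3)
    (hv1 : v ∉ M1) (hv2 : v ∉ M2) (hv3 : v ∉ M3) : False := by
  apply theta_free B hv he hint hcard hfin huv ![M1, M2, M3]
  · intro i; fin_cases i
    exacts [hint1, hint2, hint3]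
  · intro i; fin_cases i
    exacts [hxu1, hxu2, hxu3]
  · intro i; fin_cases i
    exacts [hyv1, hyv2, hyv3]
  · intro i; fin_cases i
    exacts [hed1, hed2, hed3]
  · intro i j hij z h1 h2
    fin_cases i <;> fin_cases j <;>
      first
      | exact absurd rfl hij
      | exact d12 z h1 h2 | exact d12 z h2 h1
      | exact d13 z h1 h2 | exact d13 z h2 h1
      | exact d23 z h1 h2 | exact d23 z h2 h1
  · intro i; fin_cases i
    exacts [hu1, hu2, hu3]
  · intro i; fin_cases i
    exacts [hv1, hv2, hv3]

end Wrappers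


section Configs
variable {G : SimpleGraph V} {n m : ℕ}

lemma walk_exists_edge {s t : V} (w : G.Walk s t) (h : s ≠ t) :
    ∃ p q, p ∈ w.support ∧ q ∈ w.support ∧ G.Adj p q := by
  cases w with
  | nil => exact absurd rfl h
  | cons h' p =>
    refine ⟨_, _, SimpleGraph.Walk.start_mem_support _, ?_, h'⟩
    rw [SimpleGraph.Walk.support_cons]
    exact List.mem_cons_of_mem _ (SimpleGraph.Walk.start_mem_support _)

lemma cv_offset_eq (hn : 0 < n) (c : Fin n → V) (hinj : Function.Injective c)
    (i o1 o2 : ℕ) (h1 : o1 < n) (h2 : o2 < n)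
    (h : cv hn c (i + o1) = cv hn c (i + o2)) : o1 = o2 :=
  cv_offset_inj hn c hinj h1 h2 h

/-- A "K₄ configuration". -/
lemma K4config (hn : 0 < n) (c : Fin n → V) (hinj : Function.Injective c)
    (hadj : ∀ k : ℕ, G.Adj (cv hn c k) (cv hn c (k + 1)))
    (B : Fin m → Set V)
    (hv : ∀ v, ∃ i, v ∈ B i)
    (he : ∀ u v, G.Adj u v → ∃ i, u ∈ B i ∧ v ∈ B i)
    (hint : ∀ v (i j k : Fin m), i ≤ j → j ≤ k → v ∈ B i → v ∈ B k → v ∈ B j)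
    (hcard : ∀ i, (B i).ncard ≤ 3) (hfin : ∀ i, (B i).Finite)
    (i e d : ℕ) (hd1 : 1 ≤ d) (hde : d < e) (hen : e ≤ n - 1)
    (x : V) (hx : x ∉ Set.range c)
    (hxu : G.Adj x (cv hn c i)) (hxv : G.Adj x (cv hn c (i + e)))
    (w0 : V) (W : G.Walk w0 (cv hn c (i + d)))
    (hWsupp : ∀ y ∈ W.support, y ∈ Set.range c → y = cv hn c (i + d))
    (hxW : x ∉ W.support) (hxw0 : G.Adj x w0) : False := by
  have hnn : 1 ≤ n := hn
  set cw1 := cwalk hn c hadj i (d - 1) with hcw1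
  set cw2 := cwalk hn c hadj (i + d + 1) (n - d - 2) with hcw2
  have hm1 : ∀ z, z ∈ cw1.support ↔ ∃ t, t ≤ d - 1 ∧ z = cv hn c (i + t) :=
    fun z => cwalk_mem_support hn c hadj i (d - 1) z
  have hm2 : ∀ z, z ∈ cw2.support ↔ ∃ t, t ≤ n - d - 2 ∧ z = cv hn c (i + d + 1 + t) :=
    fun z => cwalk_mem_support hn c hadj (i + d + 1) (n - d - 2) z
  have hshift : ∀ t : ℕ, cv hn c (i + d + 1 + t) = cv hn c (i + (d + 1 + t)) :=
    fun t => congrArg (cv hn c) (by omega)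
  apply K4_free4 B hv he hcard hfin
    ({x} : Set V) {z | z ∈ cw1.support} {z | z ∈ cw2.support} {z | z ∈ W.support}
    ⟨x, rfl⟩ ⟨_, cw1.start_mem_support⟩ ⟨_, cw2.start_mem_support⟩ ⟨w0, W.start_mem_support⟩
  -- intervals
  · intro j1 j2 j3 h12 h23 h1 h3
    obtain ⟨z, hz, hb1⟩ := h1
    obtain ⟨z', hz', hb3⟩ := h3
    rw [Set.mem_singleton_iff] at hz hz'
    exact ⟨x, rfl, hint x j1 j2 j3 h12 h23 (hz ▸ hb1) (hz' ▸ hb3)⟩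
  · exact walk_support_interval B he hint cw1
  · exact walk_support_interval B he hint cw2
  · exact walk_support_interval B he hint W
  -- disjointness
  · intro z hz1 hz2
    rw [Set.mem_singleton_iff] at hz1
    obtain ⟨t, ht, heq⟩ := (hm1 z).1 hz2
    exact hx (hz1 ▸ (heq ▸ cv_mem_range hn c (i + t)))
  · intro z hz1 hz2
    rw [Set.mem_singleton_iff] at hz1
    obtain ⟨t, ht, heq⟩ := (hm2 z).1 hz2
    exact hx (hz1 ▸ (heq ▸ cv_mem_range hn c (i + d + 1 + t)))
  · intro z hz1 hz2
    rw [Set.mem_singleton_iff] at hz1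
    exact hxW (hz1 ▸ hz2)
  · intro z hz1 hz2
    obtain ⟨t, ht, heq1⟩ := (hm1 z).1 hz1
    obtain ⟨t', ht', heq2⟩ := (hm2 z).1 hz2
    rw [hshift t'] at heq2
    have := cv_offset_eq hn c hinj i t (d + 1 + t') (by omega) (by omega)
      (heq1.symm.trans heq2)
    omega
  · intro z hz1 hz2
    obtain ⟨t, ht, heq1⟩ := (hm1 z).1 hz1
    have heq2 := hWsupp z hz2 (heq1 ▸ cv_mem_range hn c (i + t))
    have := cv_offset_eq hn c hinj i t d (by omega) (by omega)
      (heq1.symm.trans heq2)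
    omega
  · intro z hz1 hz2
    obtain ⟨t', ht', heq1⟩ := (hm2 z).1 hz1
    have heq2 := hWsupp z hz2 (heq1 ▸ cv_mem_range hn c (i + d + 1 + t'))
    rw [hshift t'] at heq1
    have := cv_offset_eq hn c hinj i (d + 1 + t') d (by omega) (by omega)
      (heq1.symm.trans heq2)
    omega
  -- adjacencies
  · exact ⟨x, cv hn c i, rfl, (hm1 _).2 ⟨0, by omega, rfl⟩, hxu⟩
  · refine ⟨x, cv hn c (i + e), rfl, (hm2 _).2 ⟨e - d - 1, by omega, ?_⟩, hxv⟩
    exact congrArg (cv hn c) (by omega)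
  · exact ⟨x, w0, rfl, W.start_mem_support, hxw0⟩
  · refine ⟨cv hn c i, cv hn c (i + d + 1 + (n - d - 2)), (hm1 _).2 ⟨0, by omega, rfl⟩,
      (hm2 _).2 ⟨n - d - 2, le_refl _, rfl⟩, ?_⟩
    have h1 : i + d + 1 + (n - d - 2) = i + (n - 1) := by omega
    have h2 : i + (n - 1) + 1 = i + n := by omega
    have h3 := hadj (i + (n - 1))
    rw [h2, cv_add_n] at h3
    rw [h1]
    exact h3.symm
  · refine ⟨cv hn c (i + (d - 1)), cv hn c (i + d), (hm1 _).2 ⟨d - 1, le_refl _, rfl⟩,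
      W.end_mem_support, ?_⟩
    have h1 : i + (d - 1) + 1 = i + d := by omega
    have h3 := hadj (i + (d - 1))
    rwa [h1] at h3
  · exact ⟨cv hn c (i + d + 1), cv hn c (i + d), (hm2 _).2 ⟨0, by omega, rfl⟩,
      W.end_mem_support, (hadj (i + d)).symm⟩

/-- θ(3,3,3) configuration. -/
lemma thetaArc (hn : 0 < n) (c : Fin n → V) (hinj : Function.Injective c)
    (hadj : ∀ k : ℕ, G.Adj (cv hn c k) (cv hn c (k + 1)))
    (B : Fin m → Set V)
    (hv : ∀ v, ∃ i, v ∈ B i)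
    (he : ∀ u v, G.Adj u v → ∃ i, u ∈ B i ∧ v ∈ B i)
    (hint : ∀ v (i j k : Fin m), i ≤ j → j ≤ k → v ∈ B i → v ∈ B k → v ∈ B j)
    (hcard : ∀ i, (B i).ncard ≤ 3) (hfin : ∀ i, (B i).Finite)
    (i a : ℕ) (ha3 : 3 ≤ a) (hb3 : 3 ≤ n - a) (han : a < n)
    {s3 y3 : V} (w3 : G.Walk s3 y3)
    (hadj_u : G.Adj (cv hn c i) s3) (hadj_v : G.Adj (cv hn c (i + a)) y3)
    (hs3y3 : s3 ≠ y3)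
    (hM3r : ∀ z ∈ w3.support, z ∉ Set.range c) : False := by
  have hnn : 1 ≤ n := hn
  set cw1 := cwalk hn c hadj (i + 1) (a - 2) with hcw1
  set cw2 := cwalk hn c hadj (i + a + 1) (n - a - 2) with hcw2
  have hm1 : ∀ z, z ∈ cw1.support ↔ ∃ t, t ≤ a - 2 ∧ z = cv hn c (i + 1 + t) :=
    fun z => cwalk_mem_support hn c hadj (i + 1) (a - 2) z
  have hm2 : ∀ z, z ∈ cw2.support ↔ ∃ t, t ≤ n - a - 2 ∧ z = cv hn c (i + a + 1 + t) :=
    fun z => cwalk_mem_support hn c hadj (i + a + 1) (n - a - 2) z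
  have hshift1 : ∀ t : ℕ, cv hn c (i + 1 + t) = cv hn c (i + (1 + t)) :=
    fun t => congrArg (cv hn c) (by omega)
  have hshift2 : ∀ t : ℕ, cv hn c (i + a + 1 + t) = cv hn c (i + (a + 1 + t)) :=
    fun t => congrArg (cv hn c) (by omega)
  have huv : cv hn c i ≠ cv hn c (i + a) := by
    intro h
    have h0 : cv hn c (i + 0) = cv hn c (i + a) := h
    have := cv_offset_eq hn c hinj i 0 a (by omega) (by omega) h0
    omega
  apply theta_free3 B hv he hint hcard hfin huv
    {z | z ∈ cw1.support} {z | z ∈ cw2.support} {z | z ∈ w3.support}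
    (walk_support_interval B he hint cw1) (walk_support_interval B he hint cw2)
    (walk_support_interval B he hint w3)
  · exact ⟨cv hn c (i + 1), (hm1 _).2 ⟨0, by omega, rfl⟩, hadj i⟩
  · refine ⟨cv hn c (i + a + 1 + (n - a - 2)), (hm2 _).2 ⟨n - a - 2, le_refl _, rfl⟩, ?_⟩
    have h1 : i + a + 1 + (n - a - 2) = i + (n - 1) := by omega
    have h2 : i + (n - 1) + 1 = i + n := by omega
    have h3 := hadj (i + (n - 1))
    rw [h2, cv_add_n] at h3
    rw [h1]
    exact h3.symm
  · exact ⟨s3, w3.start_mem_support, hadj_u⟩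
  · refine ⟨cv hn c (i + 1 + (a - 2)), (hm1 _).2 ⟨a - 2, le_refl _, rfl⟩, ?_⟩
    have h1 : i + 1 + (a - 2) = i + (a - 1) := by omega
    have h2 : i + (a - 1) + 1 = i + a := by omega
    have h3 := hadj (i + (a - 1))
    rw [h2] at h3
    rw [h1]
    exact h3.symm
  · exact ⟨cv hn c (i + a + 1), (hm2 _).2 ⟨0, by omega, rfl⟩, hadj (i + a)⟩
  · exact ⟨y3, w3.end_mem_support, hadj_v⟩
  · exact ⟨cv hn c (i + 1), cv hn c (i + 1 + 1), (hm1 _).2 ⟨0, by omega, rfl⟩,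
      (hm1 _).2 ⟨1, by omega, rfl⟩, hadj (i + 1)⟩
  · exact ⟨cv hn c (i + a + 1), cv hn c (i + a + 1 + 1), (hm2 _).2 ⟨0, by omega, rfl⟩,
      (hm2 _).2 ⟨1, by omega, rfl⟩, hadj (i + a + 1)⟩
  · exact walk_exists_edge w3 hs3y3
  · intro z hz1 hz2
    obtain ⟨t, ht, heq1⟩ := (hm1 z).1 hz1
    obtain ⟨t', ht', heq2⟩ := (hm2 z).1 hz2
    rw [hshift1 t] at heq1
    rw [hshift2 t'] at heq2
    have := cv_offset_eq hn c hinj i (1 + t) (a + 1 + t') (by omega) (by omega)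
      (heq1.symm.trans heq2)
    omega
  · intro z hz1 hz2
    obtain ⟨t, ht, heq⟩ := (hm1 z).1 hz1
    exact hM3r _ hz2 (heq ▸ cv_mem_range hn c (i + 1 + t))
  · intro z hz1 hz2
    obtain ⟨t, ht, heq⟩ := (hm2 z).1 hz1
    exact hM3r _ hz2 (heq ▸ cv_mem_range hn c (i + a + 1 + t))
  · intro hz
    obtain ⟨t, ht, heq⟩ := (hm1 _).1 hz
    rw [hshift1 t] at heq
    have h0 : cv hn c (i + 0) = cv hn c (i + (1 + t)) := heq
    have := cv_offset_eq hn c hinj i 0 (1 + t) (by omega) (by omega) h0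
    omega
  · intro hz
    obtain ⟨t, ht, heq⟩ := (hm2 _).1 hz
    rw [hshift2 t] at heq
    have h0 : cv hn c (i + 0) = cv hn c (i + (a + 1 + t)) := heq
    have := cv_offset_eq hn c hinj i 0 (a + 1 + t) (by omega) (by omega) h0
    omega
  · intro hz
    exact hM3r _ hz (cv_mem_range hn c i)
  · intro hz
    obtain ⟨t, ht, heq⟩ := (hm1 _).1 hz
    rw [hshift1 t] at heq
    have := cv_offset_eq hn c hinj i a (1 + t) (by omega) (by omega) heq
    omega
  · intro hz
    obtain ⟨t, ht, heq⟩ := (hm2 _).1 hz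
    rw [hshift2 t] at heq
    have := cv_offset_eq hn c hinj i a (a + 1 + t) (by omega) (by omega) heq
    omega
  · intro hz
    exact hM3r _ hz (cv_mem_range hn c (i + a))

end Configs


section EndConfig
variable {G : SimpleGraph V} {n m : ℕ}

/-- Configuration where the second escape path from the middle vertex `x` of the
`C`-path returns to one of the endpoints `cv i`: forces θ(3,3,3). -/
lemma thetaEnd (hn : 0 < n) (c : Fin n → V) (hinj : Function.Injective c)
    (hadj : ∀ k : ℕ, G.Adj (cv hn c k) (cv hn c (k + 1)))
    (B : Fin m → Set V)
    (hv : ∀ v, ∃ i, v ∈ B i)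
    (he : ∀ u v, G.Adj u v → ∃ i, u ∈ B i ∧ v ∈ B i)
    (hint : ∀ v (i j k : Fin m), i ≤ j → j ≤ k → v ∈ B i → v ∈ B k → v ∈ B j)
    (hcard : ∀ i, (B i).ncard ≤ 3) (hfin : ∀ i, (B i).Finite)
    (hlongest : ∀ (a : V) (w : G.Walk a a), w.IsCycle → w.length ≤ n)
    (i a : ℕ) (ha2 : 2 ≤ a) (hb2 : 2 ≤ n - a)
    (x : V) (hx : x ∉ Set.range c)
    (hxp : G.Adj x (cv hn c i)) (hxq : G.Adj x (cv hn c (i + a)))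
    (y : V) (hy : y ∉ Set.range c) (hxy : G.Adj x y)
    (R : G.Walk y (cv hn c i)) (hR : R.IsPath)
    (hRsupp : ∀ z ∈ R.support, z ∈ Set.range c → z = cv hn c i)
    (hxR : x ∉ R.support) : False := by
  have hnn : 1 ≤ n := hn
  have han : a < n := by omega
  have hyne : y ≠ cv hn c i := fun h => hy (h ▸ cv_mem_range hn c i)
  have hxne_v : x ≠ cv hn c (i + a) := fun h => hx (h ▸ cv_mem_range hn c (i + a))
  have hL : 1 ≤ R.length := by
    rcases Nat.eq_zero_or_pos R.length with h | h
    · exact absurd (SimpleGraph.Walk.eq_of_length_eq_zero h) hyne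
    · exact h
  have hvnotR : cv hn c (i + a) ∉ R.support := by
    intro h
    have h0 : cv hn c (i + a) = cv hn c (i + 0) := hRsupp _ h (cv_mem_range hn c (i + a))
    have := cv_offset_eq hn c hinj i a 0 (by omega) (by omega) h0
    omega
  set pwalk := SimpleGraph.Walk.cons hxq.symm (SimpleGraph.Walk.cons hxy R) with hpw
  have hpwpath : pwalk.IsPath := by
    rw [hpw, SimpleGraph.Walk.cons_isPath_iff, SimpleGraph.Walk.cons_isPath_iff]
    refine ⟨⟨hR, hxR⟩, ?_⟩
    rw [SimpleGraph.Walk.support_cons]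
    intro hmem
    rcases List.mem_cons.1 hmem with h | h
    · exact hxne_v h.symm
    · exact hvnotR h
  have hpwlen : pwalk.length = R.length + 2 := by
    rw [hpw]; simp [SimpleGraph.Walk.length_cons]
  have hpwsupp : ∀ z, z ∈ pwalk.support → z ∈ Set.range c →
      z = cv hn c (i + a) ∨ z = cv hn c i := by
    intro z hz hzr
    rw [hpw, SimpleGraph.Walk.support_cons, SimpleGraph.Walk.support_cons] at hz
    rcases List.mem_cons.1 hz with h | h
    · exact Or.inl h
    rcases List.mem_cons.1 h with h | h
    · exact absurd (h ▸ hzr) hx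
    · exact Or.inr (hRsupp z h hzr)
  have hune : cv hn c (i + a) ≠ cv hn c i := by
    intro h0
    have : cv hn c (i + a) = cv hn c (i + 0) := h0
    have := cv_offset_eq hn c hinj i a 0 (by omega) (by omega) this
    omega
  -- cycle 1 : pwalk + forward arc
  have hcyc1 : (pwalk.append (cwalk hn c hadj i a)).IsCycle := by
    apply isCycle_append _ _ hpwpath (cwalk_isPath hn c hinj hadj i a han) (by omega) hune
    intro z hz1 hz2
    have hzr : z ∈ Set.range c := by
      obtain ⟨t, ht, heq⟩ := (cwalk_mem_support hn c hadj i a z).1 hz2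
      exact heq ▸ cv_mem_range hn c (i + t)
    rcases hpwsupp z hz1 hzr with h | h
    · exact Or.inl h
    · exact Or.inr h
  have hlen1 := hlongest _ _ hcyc1
  rw [SimpleGraph.Walk.length_append, hpwlen, cwalk_length] at hlen1
  -- cycle 2 : pwalk + reversed back arc
  have harc2eq : cv hn c (i + a + (n - a)) = cv hn c i := by
    have h1 : i + a + (n - a) = i + n := by omega
    rw [h1, cv_add_n]
  set arc2 := ((cwalk hn c hadj (i + a) (n - a)).copy rfl harc2eq).reverse with harc2
  have harc2path : arc2.IsPath := by
    rw [harc2]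
    apply SimpleGraph.Walk.IsPath.reverse
    rw [SimpleGraph.Walk.isPath_copy]
    exact cwalk_isPath hn c hinj hadj (i + a) (n - a) (by omega)
  have harc2supp : ∀ z, z ∈ arc2.support → z ∈ Set.range c := by
    intro z hz
    rw [harc2, SimpleGraph.Walk.support_reverse, List.mem_reverse,
      SimpleGraph.Walk.support_copy] at hz
    obtain ⟨t, ht, heq⟩ := (cwalk_mem_support hn c hadj (i + a) (n - a) z).1 hz
    exact heq ▸ cv_mem_range hn c _
  have hcyc2 : (pwalk.append arc2).IsCycle := by
    apply isCycle_append _ _ hpwpath harc2path (by omega) hune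
    intro z hz1 hz2
    rcases hpwsupp z hz1 (harc2supp z hz2) with h | h
    · exact Or.inl h
    · exact Or.inr h
  have hlen2 := hlongest _ _ hcyc2
  rw [SimpleGraph.Walk.length_append, hpwlen] at hlen2
  have harc2len : arc2.length = n - a := by
    rw [harc2, SimpleGraph.Walk.length_reverse, SimpleGraph.Walk.length_copy, cwalk_length]
  rw [harc2len] at hlen2
  have ha3 : 3 ≤ a := by omega
  have hb3 : 3 ≤ n - a := by omega
  -- build w3 from R
  have hine : cv hn c i ≠ y := fun h => hyne h.symm
  obtain ⟨s, h2, Rt, hRrev⟩ := SimpleGraph.Walk.exists_eq_cons_of_ne hine R.reverse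
  have hRrevpath : Rt.IsPath ∧ cv hn c i ∉ Rt.support := by
    have := hR.reverse
    rw [hRrev, SimpleGraph.Walk.cons_isPath_iff] at this
    exact this
  have hRtsub : ∀ z ∈ Rt.support, z ∈ R.support := by
    intro z hz
    have : z ∈ R.reverse.support := by
      rw [hRrev, SimpleGraph.Walk.support_cons]
      exact List.mem_cons_of_mem _ hz
    rwa [SimpleGraph.Walk.support_reverse, List.mem_reverse] at this
  set w3 := Rt.append (SimpleGraph.Walk.cons hxy.symm SimpleGraph.Walk.nil) with hw3
  have hw3supp : ∀ z, z ∈ w3.support → z ∈ Rt.support ∨ z = x := by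
    intro z hz
    rw [hw3, SimpleGraph.Walk.support_append] at hz
    rcases List.mem_append.1 hz with h | h
    · exact Or.inl h
    · simp at h
      exact Or.inr h
  have hM3r : ∀ z ∈ w3.support, z ∉ Set.range c := by
    intro z hz hzr
    rcases hw3supp z hz with h | rfl
    · exact hRrevpath.2 ((hRsupp z (hRtsub z h) hzr) ▸ h)
    · exact hx hzr
  have hsx : s ≠ x := by
    intro h
    exact hxR (h ▸ hRtsub s Rt.start_mem_support)
  exact thetaArc hn c hinj hadj B hv he hint hcard hfin i a ha3 hb3 han
    w3 h2 hxq.symm hsx hM3r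

end EndConfig

end CPaux
open CPaux in
theorem cPath_short_and_internal_degree_two {V : Type*} [Fintype V] (G : SimpleGraph V)
    (h2conn : TwoConnected G) (hpw : PathwidthLE G 2)
    (n : ℕ) (hn : 3 ≤ n) (c : Fin n → V) (hinj : Function.Injective c)
    (hcyc : ∀ r s : Fin n, ((r : ℕ) + 1) % n = (s : ℕ) → G.Adj (c r) (c s))
    (hlongest : ∀ (a : V) (w : G.Walk a a), w.IsCycle → w.length ≤ n) :
    ∀ (u v : V) (P : G.Walk u v), P.IsPath → 0 < P.length →
      {w | w ∈ P.support} ∩ Set.range c = {u, v} →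
      P.length ≤ 2 ∧
      (∀ w ∈ P.support, w ∉ Set.range c → (G.neighborSet w).ncard = 2) := by
  classical
  obtain ⟨-, -, hdel⟩ := h2conn
  obtain ⟨m, B, hv, he, hint, hcard⟩ := hpw
  have hfin : ∀ i, (B i).Finite := fun i => Set.toFinite _
  have hn0 : 0 < n := by omega
  have hadjc : ∀ k : ℕ, G.Adj (cv hn0 c k) (cv hn0 c (k + 1)) := by
    intro k
    have h1 : ((k % n : ℕ) + 1) % n = (k + 1) % n := by
      conv_rhs => rw [Nat.add_mod]
      rw [Nat.mod_eq_of_lt (show 1 < n by omega)]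
    exact hcyc ⟨k % n, Nat.mod_lt _ hn0⟩ ⟨(k + 1) % n, Nat.mod_lt _ hn0⟩ h1
  have hcr : ∀ r : Fin n, cv hn0 c (r : ℕ) = c r :=
    fun r => congrArg c (Fin.ext (Nat.mod_eq_of_lt r.2))
  intro u v P hpath hlen hsupp
  have hmemP : ∀ y, y ∈ P.support → y ∈ Set.range c → y = u ∨ y = v := by
    intro y hy hyr
    have : y ∈ ({u, v} : Set V) := by rw [← hsupp]; exact ⟨hy, hyr⟩
    simpa using this
  have hur : u ∈ Set.range c := by
    have : u ∈ ({u, v} : Set V) := by simp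
    rw [← hsupp] at this; exact this.2
  have hvr : v ∈ Set.range c := by
    have : v ∈ ({u, v} : Set V) := by simp
    rw [← hsupp] at this; exact this.2
  have huv : u ≠ v := by
    intro h
    subst h
    have := SimpleGraph.Walk.isPath_iff_eq_nil.1 hpath
    rw [this] at hlen
    simp at hlen
  obtain ⟨ru, hru⟩ := hur
  obtain ⟨rv, hrv⟩ := hvr
  set i := (ru : ℕ) with hidef
  have hilt : i < n := ru.isLt
  have hiu : cv hn0 c i = u := by rw [← hru]; exact hcr ru
  have hcvat : ∀ r : Fin n, cv hn0 c (i + (((r : ℕ) + n - i) % n)) = c r := by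
    intro r
    rw [← hcr r, cv_eq_iff hn0 c hinj]
    have h1 : (i + ((r : ℕ) + n - i) % n) % n = (i + ((r : ℕ) + n - i)) % n :=
      Nat.ModEq.add_left i (Nat.mod_modEq _ n)
    rw [h1, show i + ((r : ℕ) + n - i) = (r : ℕ) + n from by omega, Nat.add_mod_right]
  set a := (((rv : ℕ)) + n - i) % n with hadef
  have hia : cv hn0 c (i + a) = v := by rw [hadef]; rw [hcvat rv, hrv]
  have han : a < n := Nat.mod_lt _ hn0
  have ha1 : 1 ≤ a := by
    rcases Nat.eq_zero_or_pos a with h | h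
    · exfalso
      apply huv
      rw [← hiu, ← hia, h]
      exact congrArg (cv hn0 c) (Nat.add_zero i).symm
    · exact h
  have hur' : u ∈ Set.range c := ⟨ru, hru⟩
  have hvr' : v ∈ Set.range c := ⟨rv, hrv⟩
  -- Claim 1: longest-cycle length bounds
  have hclaim1 : 2 ≤ P.length → P.length + (n - a) ≤ n ∧ P.length + a ≤ n := by
    intro hP2
    constructor
    · have harcBeq : cv hn0 c (i + a + (n - a)) = u := by
        rw [show i + a + (n - a) = i + n from by omega, cv_add_n, hiu]
      set arcB := ((cwalk hn0 c hadjc (i + a) (n - a)).copy hia harcBeq) with harcB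
      have harcBpath : arcB.IsPath := by
        rw [harcB, SimpleGraph.Walk.isPath_copy]
        exact cwalk_isPath hn0 c hinj hadjc (i + a) (n - a) (by omega)
      have harcBsupp : ∀ z, z ∈ arcB.support → z ∈ Set.range c := by
        intro z hz
        rw [harcB, SimpleGraph.Walk.support_copy] at hz
        obtain ⟨t, ht, heq⟩ := (cwalk_mem_support hn0 c hadjc (i + a) (n - a) z).1 hz
        exact heq ▸ cv_mem_range hn0 c _
      have hcyc1 : (P.append arcB).IsCycle := by
        apply isCycle_append _ _ hpath harcBpath hP2 huv
        intro z hz1 hz2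
        exact hmemP z hz1 (harcBsupp z hz2)
      have := hlongest _ _ hcyc1
      rw [SimpleGraph.Walk.length_append, harcB, SimpleGraph.Walk.length_copy,
        cwalk_length] at this
      exact this
    · set arcF := ((cwalk hn0 c hadjc i a).copy hiu hia).reverse with harcF
      have harcFpath : arcF.IsPath := by
        rw [harcF]
        apply SimpleGraph.Walk.IsPath.reverse
        rw [SimpleGraph.Walk.isPath_copy]
        exact cwalk_isPath hn0 c hinj hadjc i a han
      have harcFsupp : ∀ z, z ∈ arcF.support → z ∈ Set.range c := by
        intro z hz
        rw [harcF, SimpleGraph.Walk.support_reverse, List.mem_reverse,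
          SimpleGraph.Walk.support_copy] at hz
        obtain ⟨t, ht, heq⟩ := (cwalk_mem_support hn0 c hadjc i a z).1 hz
        exact heq ▸ cv_mem_range hn0 c _
      have hcyc2 : (P.append arcF).IsCycle := by
        apply isCycle_append _ _ hpath harcFpath hP2 huv
        intro z hz1 hz2
        exact hmemP z hz1 (harcFsupp z hz2)
      have := hlongest _ _ hcyc2
      rw [SimpleGraph.Walk.length_append, harcF, SimpleGraph.Walk.length_reverse,
        SimpleGraph.Walk.length_copy, cwalk_length] at this
      exact this
  -- Part 1 : P.length ≤ 2
  have hlen2 : P.length ≤ 2 := by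
    by_contra hgt
    push_neg at hgt
    have hP2 : 2 ≤ P.length := by omega
    obtain ⟨hA, hB⟩ := hclaim1 hP2
    have ha3 : 3 ≤ a := by omega
    have hb3 : 3 ≤ n - a := by omega
    obtain ⟨s, h1, Pt, hP⟩ := SimpleGraph.Walk.exists_eq_cons_of_ne huv P
    have hpath' := hpath
    rw [hP, SimpleGraph.Walk.cons_isPath_iff] at hpath'
    have hPtlen : Pt.length + 1 = P.length := by
      rw [hP, SimpleGraph.Walk.length_cons]
    have hvs : v ≠ s := by
      intro h
      subst h
      have := SimpleGraph.Walk.isPath_iff_eq_nil.1 hpath'.1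
      rw [this] at hPtlen
      simp at hPtlen
      omega
    obtain ⟨yy, h2, Qr, hQrev⟩ := SimpleGraph.Walk.exists_eq_cons_of_ne hvs Pt.reverse
    have hQpath : Qr.IsPath ∧ v ∉ Qr.support := by
      have := hpath'.1.reverse
      rw [hQrev, SimpleGraph.Walk.cons_isPath_iff] at this
      exact this
    have hQlen : Qr.length + 1 = Pt.length := by
      have := congrArg SimpleGraph.Walk.length hQrev
      rw [SimpleGraph.Walk.length_reverse, SimpleGraph.Walk.length_cons] at this
      omega
    have hQsub : ∀ z ∈ Qr.support, z ∈ Pt.support := by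
      intro z hz
      have : z ∈ Pt.reverse.support := by
        rw [hQrev, SimpleGraph.Walk.support_cons]
        exact List.mem_cons_of_mem _ hz
      rwa [SimpleGraph.Walk.support_reverse, List.mem_reverse] at this
    have hQsubP : ∀ z ∈ Qr.support, z ∈ P.support := by
      intro z hz
      rw [hP, SimpleGraph.Walk.support_cons]
      exact List.mem_cons_of_mem _ (hQsub z hz)
    have huQ : u ∉ Qr.support := fun h => hpath'.2 (hQsub _ h)
    have hsyy : s ≠ yy := by
      intro h
      subst h
      have := SimpleGraph.Walk.isPath_iff_eq_nil.1 hQpath.1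
      rw [this] at hQlen
      simp at hQlen
      omega
    have hM3r : ∀ z ∈ Qr.reverse.support, z ∉ Set.range c := by
      intro z hz hzr
      rw [SimpleGraph.Walk.support_reverse, List.mem_reverse] at hz
      rcases hmemP z (hQsubP z hz) hzr with h | h
      · exact huQ (h ▸ hz)
      · exact hQpath.2 (h ▸ hz)
    exact thetaArc hn0 c hinj hadjc B hv he hint hcard hfin i a ha3 hb3 han
      Qr.reverse (by rw [hiu]; exact h1) (by rw [hia]; exact h2)
      (fun h => hsyy h) hM3r
  refine ⟨hlen2, ?_⟩
  -- Part 2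
  intro w hw hwr
  have hwu : w ≠ u := fun h => hwr (h ▸ hur')
  have hwv : w ≠ v := fun h => hwr (h ▸ hvr')
  obtain ⟨x, h1, Pt, hP⟩ := SimpleGraph.Walk.exists_eq_cons_of_ne huv P
  have hpath' := hpath
  rw [hP, SimpleGraph.Walk.cons_isPath_iff] at hpath'
  by_cases hxv : x = v
  · subst hxv
    exfalso
    have hPtnil := SimpleGraph.Walk.isPath_iff_eq_nil.1 hpath'.1
    rw [hP, hPtnil] at hw
    simp [SimpleGraph.Walk.support_cons] at hw
    rcases hw with h | h
    · exact hwu h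
    · exact hwv h
  obtain ⟨x2, h2', Pt2, hPt⟩ := SimpleGraph.Walk.exists_eq_cons_of_ne hxv Pt
  have hPlen : P.length = Pt2.length + 2 := by
    rw [hP, hPt, SimpleGraph.Walk.length_cons, SimpleGraph.Walk.length_cons]
  have hPt20 : Pt2.length = 0 := by omega
  have hx2v : v = x2 := (SimpleGraph.Walk.eq_of_length_eq_zero hPt20).symm
  subst hx2v
  have hPt2nil : Pt2 = SimpleGraph.Walk.nil := by
    have hPt2path : Pt2.IsPath := by
      have := hpath'.1
      rw [hPt, SimpleGraph.Walk.cons_isPath_iff] at this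
      exact this.1
    exact SimpleGraph.Walk.isPath_iff_eq_nil.1 hPt2path
  have hPsupp3 : P.support = [u, x, v] := by
    rw [hP, hPt, hPt2nil]
    simp [SimpleGraph.Walk.support_cons]
  have hwx : w = x := by
    rw [hPsupp3] at hw
    simp only [List.mem_cons, List.not_mem_nil, or_false] at hw
    rcases hw with h | h | h
    · exact absurd h hwu
    · exact h
    · exact absurd h hwv
  subst hwx
  -- now w = x is the middle vertex; show neighborSet x = {u, v}
  have hP2 : P.length = 2 := by omega
  obtain ⟨hA, hB⟩ := hclaim1 (by omega)
  have ha2 : 2 ≤ a := by omega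
  have hb2 : 2 ≤ n - a := by omega
  have hxu' : G.Adj w (cv hn0 c i) := by rw [hiu]; exact h1.symm
  have hxv' : G.Adj w (cv hn0 c (i + a)) := by rw [hia]; exact h2'
  have hxq2 : G.Adj w (cv hn0 c (i + a + (n - a))) := by
    rw [show i + a + (n - a) = i + n from by omega, cv_add_n, hiu]
    exact h1.symm
  have hnbr : G.neighborSet w = {u, v} := by
    apply Set.eq_of_subset_of_subset
    · intro y hy
      have hxy : G.Adj w y := hy
      by_contra hy'
      have hyu : y ≠ u := fun h => hy' (by simp [h])
      have hyv : y ≠ v := fun h => hy' (by simp [h])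
      by_cases hyr : y ∈ Set.range c
      · -- neighbor on the cycle
        obtain ⟨ry, hry⟩ := hyr
        set d := (((ry : ℕ)) + n - i) % n with hddef
        have hid : cv hn0 c (i + d) = y := by rw [hddef, hcvat ry, hry]
        have hdn : d < n := Nat.mod_lt _ hn0
        have hd0 : d ≠ 0 := by
          intro h
          apply hyu
          have : u = y := by
            rw [← hid, h, ← hiu]
            exact congrArg (cv hn0 c) (Nat.add_zero i)
          exact this.symm
        have hda : d ≠ a := by
          intro h
          apply hyv
          have : v = y := by rw [← hid, h, hia]
          exact this.symm
        have hxny : w ≠ y := fun h => hwr (h ▸ ⟨ry, hry⟩)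
        rcases lt_or_gt_of_ne hda with hlt | hgt
        · exact K4config hn0 c hinj hadjc B hv he hint hcard hfin i a d
            (by omega) hlt (by omega) w hwr hxu' hxv' y
            ((SimpleGraph.Walk.nil : G.Walk y y).copy rfl hid.symm)
            (by
              intro z hz hzr
              rw [SimpleGraph.Walk.support_copy] at hz
              simp at hz
              rw [hz]
              exact hid.symm)
            (by
              intro hz
              rw [SimpleGraph.Walk.support_copy] at hz
              simp at hz
              exact hxny hz)
            hxy
        · have heqW : cv hn0 c (i + a + (d - a)) = y := by
            rw [show i + a + (d - a) = i + d from by omega]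
            exact hid
          exact K4config hn0 c hinj hadjc B hv he hint hcard hfin (i + a) (n - a) (d - a)
            (by omega) (by omega) (by omega) w hwr hxv' hxq2 y
            ((SimpleGraph.Walk.nil : G.Walk y y).copy rfl heqW.symm)
            (by
              intro z hz hzr
              rw [SimpleGraph.Walk.support_copy] at hz
              simp at hz
              rw [hz]
              exact heqW.symm)
            (by
              intro hz
              rw [SimpleGraph.Walk.support_copy] at hz
              simp at hz
              exact hxny hz)
            hxy
      · -- neighbor off the cycle : escape path
        have hyx : y ≠ w := hxy.ne'
        have hux : u ≠ w := fun h => hwu h.symm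
        obtain ⟨W0, hW0⟩ := exists_walk_avoiding (hdel w) hyx hux
        have hWppath : W0.bypass.IsPath := W0.bypass_isPath
        have hWpavoid : ∀ z ∈ W0.bypass.support, z ≠ w :=
          fun z hz => hW0 z (W0.support_bypass_subset hz)
        obtain ⟨z0, R0, hz0r, hfirst, hsub, hRpath, -⟩ :=
          exists_prefix_until (· ∈ Set.range c) W0.bypass hur'
        obtain ⟨rz, hrz⟩ := hz0r
        set d := (((rz : ℕ)) + n - i) % n with hddef2
        have hid : cv hn0 c (i + d) = z0 := by rw [hddef2, hcvat rz, hrz]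
        have hdn : d < n := Nat.mod_lt _ hn0
        have hRavoid : w ∉ R0.support := fun h => hWpavoid w (hsub w h) rfl
        have hRpath' := hRpath hWppath
        have hRfirst : ∀ z ∈ R0.support, z ∈ Set.range c → z = z0 := hfirst
        by_cases hd0 : d = 0
        · -- escape returns to u
          have hz0u : cv hn0 c i = z0 := by
            rw [← hid, hd0]
            exact congrArg (cv hn0 c) (Nat.add_zero i)
          exact thetaEnd hn0 c hinj hadjc B hv he hint hcard hfin hlongest i a ha2 hb2
            w hwr hxu' hxv' y hyr hxy (R0.copy rfl hz0u.symm)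
            (by rw [SimpleGraph.Walk.isPath_copy]; exact hRpath')
            (by
              intro z hz hzr
              rw [SimpleGraph.Walk.support_copy] at hz
              rw [hRfirst z hz hzr]
              exact hz0u.symm)
            (by rw [SimpleGraph.Walk.support_copy]; exact hRavoid)
        by_cases hda : d = a
        · -- escape returns to v : theta based at i + a
          have hz0v : cv hn0 c (i + a) = z0 := by rw [← hid, hda]
          have hq2 : 2 ≤ n - (n - a) := by omega
          exact thetaEnd hn0 c hinj hadjc B hv he hint hcard hfin hlongest (i + a) (n - a)
            hb2 hq2 w hwr hxv' hxq2 y hyr hxy (R0.copy rfl hz0v.symm)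
            (by rw [SimpleGraph.Walk.isPath_copy]; exact hRpath')
            (by
              intro z hz hzr
              rw [SimpleGraph.Walk.support_copy] at hz
              rw [hRfirst z hz hzr]
              exact hz0v.symm)
            (by rw [SimpleGraph.Walk.support_copy]; exact hRavoid)
        · -- escape lands in the interior of an arc : K4
          rcases lt_or_gt_of_ne hda with hlt | hgt
          · exact K4config hn0 c hinj hadjc B hv he hint hcard hfin i a d
              (by omega) hlt (by omega) w hwr hxu' hxv' y (R0.copy rfl hid.symm)
              (by
                intro z hz hzr
                rw [SimpleGraph.Walk.support_copy] at hz
                rw [hRfirst z hz hzr]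
                exact hid.symm)
              (by rw [SimpleGraph.Walk.support_copy]; exact hRavoid)
              hxy
          · have heqW : cv hn0 c (i + a + (d - a)) = z0 := by
              rw [show i + a + (d - a) = i + d from by omega]
              exact hid
            exact K4config hn0 c hinj hadjc B hv he hint hcard hfin (i + a) (n - a) (d - a)
              (by omega) (by omega) (by omega) w hwr hxv' hxq2 y (R0.copy rfl heqW.symm)
              (by
                intro z hz hzr
                rw [SimpleGraph.Walk.support_copy] at hz
                rw [hRfirst z hz hzr]
                exact heqW.symm)
              (by rw [SimpleGraph.Walk.support_copy]; exact hRavoid)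
              hxy
    · intro y hy
      rcases hy with rfl | rfl
      · exact h1.symm
      · exact h2'
  rw [hnbr]
  exact Set.ncard_pair huv
end
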